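/- arXiv:2305.18749 — 2 statements merged into one kernel-verified Lean document; each statement's English description precedes it below -/
import Mathlib

section
/- (Characterization of the hidden assumption.) Let f ∈ Γ(X). Then the following are equivalent: (i) A ∩ dom f = ∅; (ii) w*-cl(epi f* + K) = w*-cl(dom f* + cone Ω + barr C) × ℝ. -/
open Pointwise

noncomputable section

variable {X : Type*} [AddCommGroup X] [Module ℝ X] [TopologicalSpace X]

/-- Fenchel conjugate, as a function on the weak-* dual. -/
def conjFn (h : X → EReal) : WeakDual ℝ X → EReal :=
  fun p => ⨆ x : X, (p x : EReal) - h x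

/-- Epigraph of an extended-real-valued function. -/
def epiFn {V : Type*} (h : V → EReal) : Set (V × ℝ) :=
  {q | h q.1 ≤ (q.2 : EReal)}

/-- Graph of an extended-real-valued function (where it is finite). -/
def gphFn {V : Type*} (h : V → EReal) : Set (V × ℝ) :=
  {q | h q.1 = (q.2 : EReal)}

/-- Effective domain. -/
def domFn {V : Type*} (h : V → EReal) : Set V :=
  {x | h x < ⊤}

open Classical in
/-- Indicator function of a set. -/
def indicatorE {V : Type*} (D : Set V) : V → EReal :=
  fun x => if x ∈ D then (0 : EReal) else ⊤

/-- Convex cone generated by `D ∪ {0}`. -/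
def coneGen {V : Type*} [AddCommGroup V] [Module ℝ V] (D : Set V) : Set V :=
  {0} ∪ {y | ∃ t : ℝ, 0 ≤ t ∧ ∃ x ∈ convexHull ℝ D, y = t • x}

/-- `h ∈ Γ(X)`: proper, convex and lower semicontinuous. -/
def InGamma (h : X → EReal) : Prop :=
  (∀ x, h x ≠ ⊥) ∧ (∃ x, h x ≠ ⊤) ∧
    Convex ℝ {q : X × ℝ | h q.1 ≤ (q.2 : EReal)} ∧ LowerSemicontinuous h

/-- Solution set `A` of the system `σ = {f i x ≤ 0, i ∈ I; x ∈ C}`. -/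
def solSet {I : Type*} (C : Set X) (f : I → X → EReal) : Set X :=
  {x | x ∈ C ∧ ∀ i, f i x ≤ (0 : EReal)}

/-- Characteristic cone `K = cone (epi δ_C* ∪ ⋃ i, epi f_i*)` of the system. -/
def charCone {I : Type*} (C : Set X) (f : I → X → EReal) : Set (WeakDual ℝ X × ℝ) :=
  coneGen (epiFn (conjFn (indicatorE C)) ∪ ⋃ i, epiFn (conjFn (f i)))

/-- Barrier cone `barr C = dom δ_C*`. -/
def barCone (C : Set X) : Set (WeakDual ℝ X) :=
  domFn (conjFn (indicatorE C))

/-- The Farkas–Minkowski constraint qualification. -/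
def IsFM {I : Type*} (C : Set X) (f : I → X → EReal) : Prop :=
  (solSet C f).Nonempty ∧ IsClosed (charCone C f)

/-- Recession function `h^∞ = δ*_{dom h*}`. -/
def recFn (h : X → EReal) : X → EReal :=
  fun x => ⨆ q ∈ domFn (conjFn h), ((q x : ℝ) : EReal)

/-- Recession cone `D^∞ = ⋂_{t>0} t (D - a)`, for any `a ∈ D`. -/
def recCone (D : Set X) : Set X :=
  {d | ∀ a ∈ D, ∀ t : ℝ, 0 < t → d ∈ t • (D - ({a} : Set X))}

/-- Subdifferential of `h` at `a`. -/
def subdiff (h : X → EReal) (a : X) : Set (WeakDual ℝ X) :=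
  {p | (∃ r : ℝ, h a = (r : EReal)) ∧ ∀ x, h a + ((p (x - a) : ℝ) : EReal) ≤ h x}

namespace Hidden

instance : LocallyConvexSpace ℝ (WeakDual ℝ X) :=
  WeakBilin.locallyConvexSpace (B := topDualPairing ℝ X)


lemma ereal_sub_le_iff {a s y : ℝ} : ((a : EReal) - (y : EReal) ≤ (s : EReal)) ↔ a ≤ y + s := by
  rw [← EReal.coe_sub, EReal.coe_le_coe_iff]
  constructor <;> intro <;> linarith

lemma mem_epi_conj_iff {h : X → EReal} (hb : ∀ x, h x ≠ ⊥) (q : WeakDual ℝ X) (s : ℝ) :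
    conjFn h q ≤ (s : EReal) ↔ ∀ x, (q x : EReal) ≤ h x + (s : EReal) := by
  unfold conjFn
  rw [iSup_le_iff]
  refine forall_congr' fun x => ?_
  rcases eq_or_ne (h x) ⊤ with hx | hx
  · simp [hx, EReal.sub_top]
  · lift h x to ℝ using ⟨hx, hb x⟩ with y
    rw [ereal_sub_le_iff, ← EReal.coe_add, EReal.coe_le_coe_iff]

lemma conj_lower {h : X → EReal} {x₀ : X} {y₀ : ℝ} (hx₀ : h x₀ = (y₀ : EReal))
    (q : WeakDual ℝ X) : ((q x₀ - y₀ : ℝ) : EReal) ≤ conjFn h q := by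
  have : ((q x₀ - y₀ : ℝ) : EReal) = (q x₀ : EReal) - h x₀ := by
    rw [hx₀, ← EReal.coe_sub]
  rw [this]
  exact le_iSup (fun x => (q x : EReal) - h x) x₀

lemma conj_ne_bot {h : X → EReal} (hh : InGamma h) (q : WeakDual ℝ X) :
    conjFn h q ≠ ⊥ := by
  obtain ⟨x₀, hx₀⟩ := hh.2.1
  have hx₀' : h x₀ = ((h x₀).toReal : EReal) := (EReal.coe_toReal hx₀ (hh.1 x₀)).symm
  intro hbot
  have := conj_lower hx₀' q
  rw [hbot, le_bot_iff] at this
  exact EReal.coe_ne_bot _ this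

lemma mem_dom_conj_iff {h : X → EReal} (hh : InGamma h) (q : WeakDual ℝ X) :
    q ∈ domFn (conjFn h) ↔ ∃ s : ℝ, conjFn h q ≤ (s : EReal) := by
  constructor
  · intro hq
    refine ⟨(conjFn h q).toReal, ?_⟩
    rw [EReal.coe_toReal (LT.lt.ne hq) (conj_ne_bot hh q)]
  · rintro ⟨s, hs⟩
    exact lt_of_le_of_lt hs (EReal.coe_lt_top s)


section Cone

variable {V : Type*} [AddCommGroup V] [Module ℝ V] {V' : Type*} [AddCommGroup V'] [Module ℝ V']
variable {D M : Set V}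

lemma coneGen_zero_mem : (0 : V) ∈ coneGen D := Or.inl rfl

lemma subset_coneGen : D ⊆ coneGen D := fun x hx =>
  Or.inr ⟨1, zero_le_one, x, subset_convexHull ℝ D hx, (one_smul ℝ x).symm⟩

lemma coneGen_mono {D' : Set V} (h : D ⊆ D') : coneGen D ⊆ coneGen D' := by
  rintro y (rfl | ⟨t, ht, x, hx, rfl⟩)
  · exact Or.inl rfl
  · exact Or.inr ⟨t, ht, x, convexHull_mono h hx, rfl⟩

lemma coneGen_smul_mem {t : ℝ} (ht : 0 ≤ t) {x : V} (hx : x ∈ coneGen D) :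
    t • x ∈ coneGen D := by
  rcases hx with rfl | ⟨s, hs, z, hz, rfl⟩
  · exact Or.inl (smul_zero t)
  · exact Or.inr ⟨t * s, mul_nonneg ht hs, z, hz, smul_smul t s z⟩

lemma coneGen_add_mem {x y : V} (hx : x ∈ coneGen D) (hy : y ∈ coneGen D) :
    x + y ∈ coneGen D := by
  rcases hx with rfl | ⟨t, ht, u, hu, rfl⟩
  · simpa using hy
  rcases hy with rfl | ⟨s, hs, v, hv, rfl⟩
  · rw [add_zero]; exact Or.inr ⟨t, ht, u, hu, rfl⟩
  rcases eq_or_lt_of_le (add_nonneg ht hs : (0:ℝ) ≤ t + s) with hts | hts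
  · have ht0 : t = 0 := by linarith
    have hs0 : s = 0 := by linarith
    simp [ht0, hs0]
    exact coneGen_zero_mem
  · refine Or.inr ⟨t + s, le_of_lt hts, (t/(t+s)) • u + (s/(t+s)) • v, ?_, ?_⟩
    · refine (convex_convexHull ℝ D) hu hv (by positivity) (by positivity) ?_
      field_simp
    · rw [smul_add, smul_smul, smul_smul]
      rw [mul_div_cancel₀ _ (ne_of_gt hts), mul_div_cancel₀ _ (ne_of_gt hts)]

lemma convex_of_ops (h0 : (0:V) ∈ M) (hadd : ∀ x ∈ M, ∀ y ∈ M, x + y ∈ M)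
    (hsmul : ∀ t : ℝ, 0 ≤ t → ∀ x ∈ M, t • x ∈ M) : Convex ℝ M := by
  intro x hx y hy a b ha hb _
  exact hadd _ (hsmul a ha x hx) _ (hsmul b hb y hy)

lemma coneGen_convex : Convex ℝ (coneGen D) :=
  convex_of_ops coneGen_zero_mem (fun _ hx _ hy => coneGen_add_mem hx hy)
    (fun _ ht _ hx => coneGen_smul_mem ht hx)

lemma coneGen_min (hDM : D ⊆ M) (h0 : (0:V) ∈ M) (hMc : Convex ℝ M)
    (hsmul : ∀ t : ℝ, 0 ≤ t → ∀ x ∈ M, t • x ∈ M) : coneGen D ⊆ M := by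
  rintro y (rfl | ⟨t, ht, x, hx, rfl⟩)
  · exact h0
  · exact hsmul t ht x (convexHull_min hDM hMc hx)

lemma coneGen_image (L : V →ₗ[ℝ] V') (D : Set V) :
    L '' coneGen D = coneGen (L '' D) := by
  ext y
  constructor
  · rintro ⟨x, (rfl | ⟨t, ht, z, hz, rfl⟩), rfl⟩
    · simpa using (coneGen_zero_mem : (0:V') ∈ _)
    · refine Or.inr ⟨t, ht, L z, ?_, L.map_smul t z⟩
      rw [← L.coe_toAffineMap, ← AffineMap.image_convexHull] at *
      exact ⟨z, hz, rfl⟩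
  · rintro (rfl | ⟨t, ht, z, hz, rfl⟩)
    · exact ⟨0, coneGen_zero_mem, L.map_zero⟩
    · rw [← L.coe_toAffineMap, ← AffineMap.image_convexHull] at hz
      obtain ⟨w, hw, rfl⟩ := hz
      exact ⟨t • w, Or.inr ⟨t, ht, w, hw, rfl⟩, L.map_smul t w⟩

end Cone
lemma isClosed_epiFn {h : X → EReal} (hh : LowerSemicontinuous h) : IsClosed (epiFn h) := by
  have : epiFn h = (fun q : X × ℝ => ((q.1 : X), (q.2 : EReal))) ⁻¹' {p : X × EReal | h p.1 ≤ p.2} := rfl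
  rw [this]
  exact hh.isClosed_epigraph.preimage
    (continuous_fst.prodMk (continuous_coe_real_ereal.comp continuous_snd))

lemma indicator_inGamma {C : Set X} (hne : C.Nonempty) (hcl : IsClosed C) (hcv : Convex ℝ C) :
    InGamma (indicatorE C) := by
  obtain ⟨c₀, hc₀⟩ := hne
  refine ⟨?_, ⟨c₀, ?_⟩, ?_, ?_⟩
  · intro x
    unfold indicatorE
    split <;> simp
  · simp [indicatorE, hc₀]
  · have hset : {q : X × ℝ | indicatorE C q.1 ≤ (q.2 : EReal)} =
        {q : X × ℝ | q.1 ∈ C ∧ 0 ≤ q.2} := by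
      ext ⟨x, r⟩
      simp only [Set.mem_setOf_eq, indicatorE]
      split
      · simp_all [EReal.coe_nonneg]
      · simp_all
    rw [hset]
    intro p hp q hq a b ha hb hab
    refine ⟨hcv hp.1 hq.1 ha hb hab, ?_⟩
    have := hp.2; have := hq.2
    simp only [Prod.smul_snd, Prod.snd_add, smul_eq_mul]
    positivity
  · intro x y hy
    by_cases hx : x ∈ C
    · simp only [indicatorE, if_pos hx] at hy
      filter_upwards with z
      calc y < (0:EReal) := hy
      _ ≤ indicatorE C z := by unfold indicatorE; split <;> simp
    · simp only [indicatorE, if_neg hx] at hy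
      have : ∀ᶠ z in nhds x, z ∈ Cᶜ := hcl.isOpen_compl.mem_nhds hx
      filter_upwards [this] with z hz
      rw [indicatorE, if_neg hz]; exact hy

lemma mem_barCone_iff {C : Set X} (hne : C.Nonempty) (hcl : IsClosed C) (hcv : Convex ℝ C)
    (q : WeakDual ℝ X) :
    q ∈ barCone C ↔ ∃ s : ℝ, ∀ x ∈ C, q x ≤ s := by
  rw [barCone, Hidden.mem_dom_conj_iff (indicator_inGamma hne hcl hcv)]
  refine exists_congr fun s => ?_
  rw [Hidden.mem_epi_conj_iff (indicator_inGamma hne hcl hcv).1]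
  constructor
  · intro H x hx
    have := H x
    rw [indicatorE, if_pos hx, zero_add, EReal.coe_le_coe_iff] at this
    exact this
  · intro H x
    by_cases hx : x ∈ C
    · rw [indicatorE, if_pos hx, zero_add]
      exact_mod_cast H x hx
    · simp [indicatorE, if_neg hx]

lemma barCone_ops {C : Set X} (hne : C.Nonempty) (hcl : IsClosed C) (hcv : Convex ℝ C) :
    (0 : WeakDual ℝ X) ∈ barCone C ∧
      (∀ p ∈ barCone C, ∀ q ∈ barCone C, p + q ∈ barCone C) ∧
      (∀ t : ℝ, 0 ≤ t → ∀ p ∈ barCone C, t • p ∈ barCone C) := by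
  have hiff := mem_barCone_iff hne hcl hcv
  refine ⟨?_, ?_, ?_⟩
  · exact (hiff 0).2 ⟨0, fun x _ => le_of_eq rfl⟩
  · intro p hp q hq
    obtain ⟨s, hs⟩ := (hiff p).1 hp
    obtain ⟨u, hu⟩ := (hiff q).1 hq
    refine (hiff _).2 ⟨s + u, fun x hx => ?_⟩
    have h1 : (p + q) x = p x + q x := rfl
    rw [h1]
    exact add_le_add (hs x hx) (hu x hx)
  · intro t ht p hp
    obtain ⟨s, hs⟩ := (hiff p).1 hp
    refine (hiff _).2 ⟨t * s, fun x hx => ?_⟩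
    have h1 : (t • p) x = t * p x := rfl
    rw [h1]
    exact mul_le_mul_of_nonneg_left (hs x hx) ht

def toW (Q : X →L[ℝ] ℝ) : WeakDual ℝ X := Q

@[simp] lemma toW_apply (Q : X →L[ℝ] ℝ) (w : X) : toW Q w = Q w := rfl

@[simp] lemma wd_add_apply (q q' : WeakDual ℝ X) (x : X) : (q + q') x = q x + q' x := rfl
@[simp] lemma wd_smul_apply (t : ℝ) (q : WeakDual ℝ X) (x : X) : (t • q) x = t * q x := rfl
@[simp] lemma wd_zero_apply (x : X) : (0 : WeakDual ℝ X) x = 0 := rfl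

lemma phi_decomp {V : Type*} [AddCommGroup V] [Module ℝ V] [TopologicalSpace V]
    (Φ : (V × ℝ) →L[ℝ] ℝ) (y : V) (t : ℝ) :
    Φ (y, t) = Φ (y, 0) + t * Φ (0, 1) := by
  have h1 : (y, t) = ((y, (0:ℝ)) + t • ((0:V), (1:ℝ))) := by
    simp [Prod.ext_iff]
  rw [h1, map_add, map_smul, smul_eq_mul]

lemma minorant_core {h : X → EReal} (hb : ∀ x, h x ≠ ⊥) {Φ : (X × ℝ) →L[ℝ] ℝ} {u : ℝ}
    (hsep : ∀ z ∈ epiFn h, Φ z < u) (hneg : Φ ((0:X), (1:ℝ)) < 0) :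
    ∃ (q : WeakDual ℝ X) (s : ℝ), conjFn h q ≤ (s : EReal) ∧
      (∀ w : X, q w = (-(Φ (0,1)))⁻¹ * Φ (w, 0)) ∧ s = u / (-(Φ (0,1))) := by
  have ha : (0:ℝ) < -(Φ (0,1)) := by linarith
  have happ : ∀ w : X,
      toW ((-(Φ (0,1)))⁻¹ • Φ.comp (ContinuousLinearMap.inl ℝ X ℝ)) w
        = (-(Φ (0,1)))⁻¹ * Φ (w, 0) := by
    intro w
    rw [toW_apply, ContinuousLinearMap.smul_apply, ContinuousLinearMap.comp_apply,
      ContinuousLinearMap.inl_apply, smul_eq_mul]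
  refine ⟨toW ((-(Φ (0,1)))⁻¹ • Φ.comp (ContinuousLinearMap.inl ℝ X ℝ)),
    u / (-(Φ (0,1))), ?_, happ, rfl⟩
  rw [mem_epi_conj_iff hb]
  intro y
  rcases eq_or_ne (h y) ⊤ with hy | hy
  · simp [hy]
  · lift h y to ℝ using ⟨hy, hb y⟩ with z hz
    have hmem : (y, z) ∈ epiFn h := by
      simp only [epiFn, Set.mem_setOf_eq]; rw [hz]
    have hlt := hsep _ hmem
    rw [phi_decomp Φ y z] at hlt
    rw [happ y, ← EReal.coe_add, EReal.coe_le_coe_iff]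
    have h2 : Φ (y, 0) ≤ u + z * (-(Φ (0,1))) := by nlinarith
    have h3 : (-(Φ (0,1)))⁻¹ * Φ (y, 0) ≤ (-(Φ (0,1)))⁻¹ * (u + z * (-(Φ (0,1)))) :=
      mul_le_mul_of_nonneg_left h2 (inv_nonneg.2 ha.le)
    have h4 : (-(Φ (0,1)))⁻¹ * (u + z * (-(Φ (0,1)))) = z + u / (-(Φ (0,1))) := by
      have hAne : Φ ((0:X),(1:ℝ)) ≠ 0 := ne_of_lt hneg
      field_simp [hAne]
      ring
    linarith [h3, h4.le]

lemma exists_conj_point [IsTopologicalAddGroup X] [ContinuousSMul ℝ X] [LocallyConvexSpace ℝ X]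
    {h : X → EReal} (hh : InGamma h) :
    ∃ (q : WeakDual ℝ X) (s : ℝ), conjFn h q ≤ (s : EReal) := by
  obtain ⟨x₀, hx₀⟩ := hh.2.1
  obtain ⟨r₀, hr₀⟩ : ∃ r : ℝ, h x₀ = (r : EReal) :=
    ⟨(h x₀).toReal, (EReal.coe_toReal hx₀ (hh.1 x₀)).symm⟩
  have hnm : (x₀, r₀ - 1) ∉ epiFn h := by
    simp only [epiFn, Set.mem_setOf_eq, hr₀, EReal.coe_le_coe_iff]
    push_neg
    linarith
  obtain ⟨Φ, u, hΦ, hu⟩ := geometric_hahn_banach_closed_point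
    (hh.2.2.1 : Convex ℝ (epiFn h)) (isClosed_epiFn hh.2.2.2) hnm
  have hmem0 : (x₀, r₀) ∈ epiFn h := by
    simp only [epiFn, Set.mem_setOf_eq]; exact le_of_eq hr₀
  have h1 := hΦ _ hmem0
  rw [phi_decomp Φ x₀ r₀] at h1
  rw [phi_decomp Φ x₀ (r₀ - 1)] at hu
  have hneg : Φ ((0:X), (1:ℝ)) < 0 := by nlinarith
  obtain ⟨q, s, hq, -, -⟩ := minorant_core hh.1 hΦ hneg
  exact ⟨q, s, hq⟩

lemma exists_conj_minorant [IsTopologicalAddGroup X] [ContinuousSMul ℝ X] [LocallyConvexSpace ℝ X]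
    {h : X → EReal} (hh : InGamma h) (x : X) (c : ℝ) (hc : (c : EReal) < h x) :
    ∃ (q : WeakDual ℝ X) (s : ℝ), conjFn h q ≤ (s : EReal) ∧ c < q x - s := by
  obtain ⟨x₀, hx₀⟩ := hh.2.1
  obtain ⟨r₀, hr₀⟩ : ∃ r : ℝ, h x₀ = (r : EReal) :=
    ⟨(h x₀).toReal, (EReal.coe_toReal hx₀ (hh.1 x₀)).symm⟩
  have hnm : (x, c) ∉ epiFn h := by
    simp only [epiFn, Set.mem_setOf_eq]
    exact fun hmem => absurd hc (not_lt.2 hmem)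
  obtain ⟨Φ, u, hΦ, hu⟩ := geometric_hahn_banach_closed_point
    (hh.2.2.1 : Convex ℝ (epiFn h)) (isClosed_epiFn hh.2.2.2) hnm
  rw [phi_decomp Φ x c] at hu
  have hcle : Φ ((0:X), (1:ℝ)) ≤ 0 := by
    by_contra hpos
    push_neg at hpos
    obtain ⟨t₂, ht₂a, ht₂b⟩ : ∃ t₂ : ℝ, r₀ ≤ t₂ ∧
        (u - Φ (x₀, 0)) / Φ (0,1) < t₂ :=
      ⟨max r₀ ((u - Φ (x₀, 0)) / Φ (0,1)) + 1,
        by linarith [le_max_left r₀ ((u - Φ (x₀, 0)) / Φ (0,1))],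
        by linarith [le_max_right r₀ ((u - Φ (x₀, 0)) / Φ (0,1))]⟩
    have hmem2 : (x₀, t₂) ∈ epiFn h := by
      simp only [epiFn, Set.mem_setOf_eq, hr₀, EReal.coe_le_coe_iff]
      exact ht₂a
    have h2 := hΦ _ hmem2
    rw [phi_decomp Φ x₀ t₂] at h2
    rw [div_lt_iff₀ hpos] at ht₂b
    linarith
  rcases lt_or_eq_of_le hcle with hneg | hzero
  · obtain ⟨q, s, hq, hqw, hs⟩ := minorant_core hh.1 hΦ hneg
    refine ⟨q, s, hq, ?_⟩
    have ha : (0:ℝ) < -(Φ (0,1)) := by linarith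
    have h2 : u + c * (-(Φ (0,1))) < Φ (x, 0) := by nlinarith
    rw [hqw x, hs]
    have h5 : c + u / (-(Φ (0,1))) < (-(Φ (0,1)))⁻¹ * Φ (x, 0) := by
      rw [← lt_sub_iff_add_lt, ← sub_pos]
      have hkey : (-(Φ (0,1)))⁻¹ * Φ (x, 0) - u / (-(Φ (0,1))) - c
          = (Φ (x, 0) - u - c * (-(Φ (0,1)))) / (-(Φ (0,1))) := by
        have hAne : Φ ((0:X),(1:ℝ)) ≠ 0 := ne_of_lt hneg
        field_simp [hAne]
        ring
      rw [hkey]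
      apply div_pos _ ha
      linarith
    linarith
  · obtain ⟨q₀, s₀, hq₀⟩ := exists_conj_point hh
    have hsep' : ∀ y : X, h y ≠ ⊤ → Φ (y, 0) < u := by
      intro y hy
      obtain ⟨ry, hry⟩ : ∃ r : ℝ, h y = (r : EReal) :=
        ⟨(h y).toReal, (EReal.coe_toReal hy (hh.1 y)).symm⟩
      have hmem : (y, ry) ∈ epiFn h := by
        simp only [epiFn, Set.mem_setOf_eq]; exact le_of_eq hry
      have h6 := hΦ _ hmem
      rw [phi_decomp Φ y ry, hzero, mul_zero, add_zero] at h6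
      exact h6
    have hxgt : u < Φ (x, 0) := by
      rw [hzero, mul_zero, add_zero] at hu; exact hu
    have hQapp : ∀ w : X, (Φ.comp (ContinuousLinearMap.inl ℝ X ℝ)) w = Φ (w, 0) := by
      intro w
      rw [ContinuousLinearMap.comp_apply, ContinuousLinearMap.inl_apply]
    have hd : (0:ℝ) < Φ (x, 0) - u := by linarith
    obtain ⟨lam, hlam0, hlam⟩ : ∃ lam : ℝ, 0 ≤ lam ∧
        (c - (q₀ x - s₀)) / (Φ (x, 0) - u) < lam :=
      ⟨max 0 ((c - (q₀ x - s₀)) / (Φ (x, 0) - u)) + 1,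
        by linarith [le_max_left (0:ℝ) ((c - (q₀ x - s₀)) / (Φ (x, 0) - u))],
        by linarith [le_max_right (0:ℝ) ((c - (q₀ x - s₀)) / (Φ (x, 0) - u))]⟩
    rw [div_lt_iff₀ hd] at hlam
    refine ⟨q₀ + lam • toW (Φ.comp (ContinuousLinearMap.inl ℝ X ℝ)), s₀ + lam * u, ?_, ?_⟩
    · rw [mem_epi_conj_iff hh.1]
      intro y
      rcases eq_or_ne (h y) ⊤ with hy | hy
      · rw [hy, EReal.top_add_coe]
        exact le_top
      · lift h y to ℝ using ⟨hy, hh.1 y⟩ with z hz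
        have hmin := (mem_epi_conj_iff hh.1 q₀ s₀).1 hq₀ y
        rw [← hz] at hmin
        rw [← EReal.coe_add, EReal.coe_le_coe_iff] at hmin ⊢
        have h6 := hsep' y (by rw [← hz]; exact EReal.coe_ne_top z)
        have happ : (q₀ + lam • toW (Φ.comp (ContinuousLinearMap.inl ℝ X ℝ))) y
            = q₀ y + lam * Φ (y, 0) := by
          rw [wd_add_apply, wd_smul_apply, toW_apply, hQapp]
        rw [happ]
        nlinarith
    · have happ : (q₀ + lam • toW (Φ.comp (ContinuousLinearMap.inl ℝ X ℝ))) x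
          = q₀ x + lam * Φ (x, 0) := by
        rw [wd_add_apply, wd_smul_apply, toW_apply, hQapp]
      rw [happ]
      nlinarith


def evalW (x : X) : WeakDual ℝ X →ₗ[ℝ] ℝ where
  toFun q := q x
  map_add' _ _ := rfl
  map_smul' _ _ := rfl

lemma weakdual_repr (ψ : WeakDual ℝ X →L[ℝ] ℝ) : ∃ x : X, ∀ q : WeakDual ℝ X, ψ q = q x := by
  have h1 : ψ ⁻¹' Set.Ioo (-1 : ℝ) 1 ∈ nhds (0 : WeakDual ℝ X) := by
    have h0 : ψ 0 = 0 := map_zero ψ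
    apply ψ.continuous.continuousAt.preimage_mem_nhds
    rw [h0]
    exact isOpen_Ioo.mem_nhds (by norm_num)
  obtain ⟨U, hU, hUsub⟩ :=
    (LinearMap.hasBasis_weakBilin (topDualPairing ℝ X)).mem_iff.1 h1
  obtain ⟨i, r, hr, rfl⟩ := (SeminormFamily.basisSets_iff _).1 hU
  have hker : ∀ q : WeakDual ℝ X, (∀ x ∈ i, q x = 0) → ψ q = 0 := by
    intro q hq
    by_contra hne
    have hmem : ∀ n : ℝ, n • q ∈ (i.sup (topDualPairing ℝ X).toSeminormFamily).ball 0 r := by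
      intro n
      refine (Seminorm.mem_ball_zero _).2 ?_
      refine Seminorm.finset_sup_apply_lt hr fun j hj => ?_
      show ‖n * q j‖ < r
      rw [hq j hj, mul_zero, norm_zero]
      exact hr
    have h2 := hUsub (hmem (2 / ψ q))
    replace h2 : ψ ((2 / ψ q) • q) ∈ Set.Ioo (-1:ℝ) 1 := h2
    simp only [Set.mem_Ioo] at h2
    rw [map_smul, smul_eq_mul, div_mul_cancel₀ _ hne] at h2
    linarith [h2.2]
  classical
  have hle : ⨅ j : {x // x ∈ i}, LinearMap.ker (evalW (X := X) (j : X)) ≤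
      LinearMap.ker (ψ : WeakDual ℝ X →ₗ[ℝ] ℝ) := by
    intro q hq
    rw [Submodule.mem_iInf] at hq
    have : ∀ x ∈ i, q x = 0 := fun x hx => hq ⟨x, hx⟩
    exact hker q this
  have hspan := mem_span_of_iInf_ker_le_ker hle
  obtain ⟨c, hc⟩ := (Submodule.mem_span_range_iff_exists_fun ℝ).1 hspan
  refine ⟨∑ j : {x // x ∈ i}, c j • (j : X), fun q => ?_⟩
  have hq : q (∑ j : {x // x ∈ i}, c j • (j : X)) = ∑ j : {x // x ∈ i}, c j * q (j : X) := by
    rw [map_sum]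
    exact Finset.sum_congr rfl fun j _ => by rw [map_smul, smul_eq_mul]
  have h3 : (ψ : WeakDual ℝ X →ₗ[ℝ] ℝ) q = ∑ j : {x // x ∈ i}, c j * q (j : X) := by
    rw [← hc]
    simp only [LinearMap.coe_sum, Finset.sum_apply, LinearMap.smul_apply, smul_eq_mul]
    rfl
  rw [hq]
  exact h3



lemma epi_conj_convex {h : X → EReal} (hb : ∀ x, h x ≠ ⊥) :
    Convex ℝ (epiFn (conjFn h)) := by
  rintro ⟨q, s⟩ hz ⟨q', s'⟩ hw a b ha hb' hab
  have h1 := (mem_epi_conj_iff hb q s).1 hz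
  have h2 := (mem_epi_conj_iff hb q' s').1 hw
  have hgoal : conjFn h (a • q + b • q') ≤ ((a * s + b * s' : ℝ) : EReal) := by
    rw [mem_epi_conj_iff hb]
    intro x
    rcases eq_or_ne (h x) ⊤ with hx | hx
    · rw [hx, EReal.top_add_coe]; exact le_top
    · have hxb := hb x
      lift h x to ℝ using ⟨hx, hxb⟩ with z hzz
      have e1 := h1 x
      have e2 := h2 x
      rw [← hzz, ← EReal.coe_add, EReal.coe_le_coe_iff] at e1 e2
      have happ : (a • q + b • q') x = a * q x + b * q' x := by
        rw [wd_add_apply, wd_smul_apply, wd_smul_apply]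
      rw [happ, ← EReal.coe_add, EReal.coe_le_coe_iff]
      have e3 := mul_le_mul_of_nonneg_left e1 ha
      have e4 := mul_le_mul_of_nonneg_left e2 hb'
      have e5 : a * (z + s) + b * (z + s') = z + (a * s + b * s') := by
        have hub : a = 1 - b := by linarith
        rw [hub]; ring
      linarith
  show conjFn h (a • (q, s) + b • (q', s')).1 ≤ ((a • (q, s) + b • (q', s')).2 : EReal)
  simpa using hgoal

lemma fst_image_epi_conj {h : X → EReal} (hh : InGamma h) :
    Prod.fst '' epiFn (conjFn h) = domFn (conjFn h) := by
  ext q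
  constructor
  · rintro ⟨⟨q', s⟩, hmem, rfl⟩
    exact lt_of_le_of_lt hmem (EReal.coe_lt_top s)
  · intro hq
    obtain ⟨s, hs⟩ := (mem_dom_conj_iff hh q).1 hq
    exact ⟨(q, s), hs, rfl⟩

lemma charCone_le {I : Type*} {C : Set X} {f : I → X → EReal}
    (hCne : C.Nonempty) (hCcl : IsClosed C) (hCcv : Convex ℝ C)
    (hf : ∀ i, InGamma (f i)) {a : X} (ha : a ∈ solSet C f) :
    ∀ z ∈ charCone C f, z.1 a ≤ z.2 := by
  have hsub : (epiFn (conjFn (indicatorE C)) ∪ ⋃ i, epiFn (conjFn (f i))) ⊆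
      {z : WeakDual ℝ X × ℝ | z.1 a ≤ z.2} := by
    rintro ⟨q, s⟩ (hm | hm)
    · have h1 := (mem_epi_conj_iff (indicator_inGamma hCne hCcl hCcv).1 q s).1 hm a
      rw [indicatorE, if_pos ha.1, zero_add, EReal.coe_le_coe_iff] at h1
      exact h1
    · rw [Set.mem_iUnion] at hm
      obtain ⟨i, hm⟩ := hm
      have h1 := (mem_epi_conj_iff (hf i).1 q s).1 hm a
      have h2 : f i a + (s : EReal) ≤ ((s : ℝ) : EReal) := by
        calc f i a + (s : EReal) ≤ 0 + (s : EReal) := add_le_add_left (ha.2 i) _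
        _ = (s : EReal) := zero_add _
      exact EReal.coe_le_coe_iff.1 (le_trans h1 h2)
  intro z hz
  refine coneGen_min hsub ?_ ?_ ?_ hz
  · show (0 : WeakDual ℝ X × ℝ).1 a ≤ (0 : WeakDual ℝ X × ℝ).2
    simp
  · intro z1 h1 z2 h2 a' b' ha' hb' hab
    show (a' • z1 + b' • z2).1 a ≤ (a' • z1 + b' • z2).2
    have happ : (a' • z1 + b' • z2).1 a = a' * z1.1 a + b' * z2.1 a := by
      simp [Prod.fst_add, Prod.smul_fst]
    have h2' : (a' • z1 + b' • z2).2 = a' * z1.2 + b' * z2.2 := by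
      simp [Prod.snd_add, Prod.smul_snd]
    rw [happ, h2']
    have h1' : z1.1 a ≤ z1.2 := h1
    have h2'' : z2.1 a ≤ z2.2 := h2
    have e3 := mul_le_mul_of_nonneg_left h1' ha'
    have e4 := mul_le_mul_of_nonneg_left h2'' hb'
    linarith
  · intro t ht z1 h1
    show (t • z1).1 a ≤ (t • z1).2
    have happ : (t • z1).1 a = t * z1.1 a := by simp [Prod.smul_fst]
    have h2' : (t • z1).2 = t * z1.2 := by simp [Prod.smul_snd]
    rw [happ, h2']
    exact mul_le_mul_of_nonneg_left h1 ht

lemma barCone_convex {C : Set X} (hne : C.Nonempty) (hcl : IsClosed C) (hcv : Convex ℝ C) :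
    Convex ℝ (barCone (X := X) C) := by
  obtain ⟨h0, hadd, hsmul⟩ := barCone_ops hne hcl hcv
  exact convex_of_ops h0 hadd hsmul

lemma charCone_fst {I : Type*} {C : Set X} {f : I → X → EReal}
    (hCne : C.Nonempty) (hCcl : IsClosed C) (hCcv : Convex ℝ C) (hf : ∀ i, InGamma (f i)) :
    ∀ z ∈ charCone C f,
      z.1 ∈ coneGen (⋃ i, domFn (conjFn (f i))) + barCone C := by
  intro z hz
  obtain ⟨h0bar, haddbar, hsmulbar⟩ := barCone_ops hCne hCcl hCcv
  have himg : z.1 ∈ (LinearMap.fst ℝ (WeakDual ℝ X) ℝ) '' charCone C f := ⟨z, hz, rfl⟩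
  rw [charCone, coneGen_image] at himg
  have hS : (LinearMap.fst ℝ (WeakDual ℝ X) ℝ) ''
      (epiFn (conjFn (indicatorE C)) ∪ ⋃ i, epiFn (conjFn (f i)))
      = barCone C ∪ ⋃ i, domFn (conjFn (f i)) := by
    have hcoe : ⇑(LinearMap.fst ℝ (WeakDual ℝ X) ℝ) = (Prod.fst : WeakDual ℝ X × ℝ → WeakDual ℝ X) := rfl
    rw [Set.image_union, hcoe, Set.image_iUnion]
    congr 1
    · exact fst_image_epi_conj (indicator_inGamma hCne hCcl hCcv)
    · exact Set.iUnion_congr fun i => fst_image_epi_conj (hf i)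
  rw [hS] at himg
  set M := coneGen (⋃ i, domFn (conjFn (f i))) + barCone (X := X) C with hM
  have hMconv : Convex ℝ M := Convex.add coneGen_convex (barCone_convex hCne hCcl hCcv)
  have hM0 : (0 : WeakDual ℝ X) ∈ M := by
    rw [hM, ← add_zero (0 : WeakDual ℝ X)]
    exact Set.add_mem_add coneGen_zero_mem h0bar
  have hMsmul : ∀ t : ℝ, 0 ≤ t → ∀ x ∈ M, t • x ∈ M := by
    rintro t ht x ⟨u, hu, v, hv, rfl⟩
    rw [smul_add]
    exact Set.add_mem_add (coneGen_smul_mem ht hu) (hsmulbar t ht v hv)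
  have hDM : barCone (X := X) C ∪ ⋃ i, domFn (conjFn (f i)) ⊆ M := by
    rintro q (hb | hΩ)
    · rw [hM, ← zero_add q]
      exact Set.add_mem_add coneGen_zero_mem hb
    · rw [hM, ← add_zero q]
      exact Set.add_mem_add (subset_coneGen hΩ) h0bar
  exact coneGen_min hDM hM0 hMconv hMsmul himg

lemma coneGen_dom_lift {I : Type*} {C : Set X} {f : I → X → EReal} (hf : ∀ i, InGamma (f i)) :
    ∀ p ∈ coneGen (⋃ i, domFn (conjFn (f i))), ∃ s : ℝ, (p, s) ∈ charCone C f := by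
  intro p hp
  have hcoe : ⇑(LinearMap.fst ℝ (WeakDual ℝ X) ℝ) = (Prod.fst : WeakDual ℝ X × ℝ → WeakDual ℝ X) := rfl
  have hΩ : (⋃ i, domFn (conjFn (f i)))
      = (LinearMap.fst ℝ (WeakDual ℝ X) ℝ) '' (⋃ i, epiFn (conjFn (f i))) := by
    rw [hcoe, Set.image_iUnion]
    exact Set.iUnion_congr fun i => (fst_image_epi_conj (hf i)).symm
  rw [hΩ, ← coneGen_image] at hp
  obtain ⟨z, hz, hz1⟩ := hp
  refine ⟨z.2, ?_⟩
  have : (p, z.2) = z := by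
    rw [← hz1]
    rfl
  rw [this]
  exact coneGen_mono Set.subset_union_right hz

lemma barCone_lift {C : Set X} (hne : C.Nonempty) (hcl : IsClosed C) (hcv : Convex ℝ C)
    {I : Type*} {f : I → X → EReal} :
    ∀ p ∈ barCone (X := X) C, ∃ s : ℝ, (p, s) ∈ charCone C f := by
  intro p hp
  obtain ⟨s, hs⟩ := (mem_dom_conj_iff (indicator_inGamma hne hcl hcv) p).1 hp
  exact ⟨s, subset_coneGen (Or.inl hs)⟩


end Hidden

open Hidden in
/-- Theorem 3 (Characterization of the hidden assumption). -/
theorem stmt10 [IsTopologicalAddGroup X] [ContinuousSMul ℝ X] [LocallyConvexSpace ℝ X] [T2Space X] {I : Type*} (C : Set X) (hCne : C.Nonempty) (hCcl : IsClosed C) (hCcv : Convex ℝ C)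
    (f : I → X → EReal) (hf : ∀ i, InGamma (f i))
    (g : X → EReal) (hg : InGamma g) :
    solSet C f ∩ domFn g = ∅ ↔
      closure (epiFn (conjFn g) + charCone C f) =
        (closure (domFn (conjFn g) + coneGen (⋃ i, domFn (conjFn (f i))) + barCone C)) ×ˢ
          (Set.univ : Set ℝ) := by
  classical
  constructor
  · intro hempty
    apply Set.Subset.antisymm
    · have hsub : epiFn (conjFn g) + charCone C f ⊆
          (domFn (conjFn g) + coneGen (⋃ i, domFn (conjFn (f i))) + barCone C) ×ˢ
            (Set.univ : Set ℝ) := by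
        rintro z ⟨z₁, hz₁, z₂, hz₂, rfl⟩
        refine ⟨?_, trivial⟩
        have h1 : z₁.1 ∈ domFn (conjFn g) := lt_of_le_of_lt hz₁ (EReal.coe_lt_top _)
        have h2 := charCone_fst hCne hCcl hCcv hf z₂ hz₂
        have h3 : z₁.1 + z₂.1 ∈
            domFn (conjFn g) + (coneGen (⋃ i, domFn (conjFn (f i))) + barCone C) :=
          Set.add_mem_add h1 h2
        rw [← add_assoc] at h3
        exact h3
      calc closure (epiFn (conjFn g) + charCone C f)
          ⊆ closure ((domFn (conjFn g) + coneGen (⋃ i, domFn (conjFn (f i))) + barCone C) ×ˢ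
              (Set.univ : Set ℝ)) := closure_mono hsub
        _ = (closure (domFn (conjFn g) + coneGen (⋃ i, domFn (conjFn (f i))) + barCone C)) ×ˢ
              (Set.univ : Set ℝ) := by rw [closure_prod_eq, closure_univ]
    · have key : (domFn (conjFn g) + coneGen (⋃ i, domFn (conjFn (f i))) + barCone C) ×ˢ
          (Set.univ : Set ℝ) ⊆ closure (epiFn (conjFn g) + charCone C f) := by
        rintro ⟨p, r⟩ ⟨hp, -⟩
        obtain ⟨p01, hp01, p₂, hp₂, rfl⟩ := hp
        obtain ⟨p₀, hp₀, p₁, hp₁, rfl⟩ := hp01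
        obtain ⟨r₀, hr₀⟩ := (mem_dom_conj_iff hg p₀).1 hp₀
        obtain ⟨s₁, hs₁⟩ := coneGen_dom_lift (C := C) hf p₁ hp₁
        obtain ⟨s₂, hs₂⟩ := barCone_lift hCne hCcl hCcv (f := f) p₂ hp₂
        have hEup : ∀ t : ℝ, r₀ + (s₁ + s₂) ≤ t →
            (p₀ + p₁ + p₂, t) ∈ epiFn (conjFn g) + charCone C f := by
          intro t ht
          have h₁ : (p₀, t - (s₁ + s₂)) ∈ epiFn (conjFn g) := by
            show conjFn g p₀ ≤ ((t - (s₁ + s₂) : ℝ) : EReal)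
            exact le_trans hr₀ (EReal.coe_le_coe_iff.2 (by linarith))
          have h₂ : ((p₁, s₁) + (p₂, s₂) : WeakDual ℝ X × ℝ) ∈ charCone C f :=
            coneGen_add_mem hs₁ hs₂
          have h₃ := Set.add_mem_add h₁ h₂
          have heqz : ((p₀, t - (s₁ + s₂)) + ((p₁, s₁) + (p₂, s₂)) : WeakDual ℝ X × ℝ)
              = (p₀ + p₁ + p₂, t) := by
            rw [Prod.mk_add_mk, Prod.mk_add_mk]
            refine Prod.ext ?_ ?_
            · rw [add_assoc]
            · show t - (s₁ + s₂) + (s₁ + s₂) = t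
              ring
          rw [heqz] at h₃
          exact h₃
        by_contra hnc
        have hconv : Convex ℝ (closure (epiFn (conjFn g) + charCone C f)) :=
          (Convex.add (epi_conj_convex hg.1) coneGen_convex).closure
        obtain ⟨Φ, u, hΦpt, hΦset⟩ :=
          geometric_hahn_banach_point_closed hconv isClosed_closure hnc
        have hEineq : ∀ z ∈ epiFn (conjFn g) + charCone C f, u < Φ z :=
          fun z hz => hΦset z (subset_closure hz)
        have hR'a : r₀ + (s₁ + s₂) ≤ max (r₀ + (s₁ + s₂)) (r + 1) := le_max_left _ _
        have hR'b : r + 1 ≤ max (r₀ + (s₁ + s₂)) (r + 1) := le_max_right _ _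
        have e1 := hEineq _ (hEup _ hR'a)
        have e2 := hΦpt
        rw [phi_decomp Φ (p₀ + p₁ + p₂) (max (r₀ + (s₁ + s₂)) (r + 1))] at e1
        rw [phi_decomp Φ (p₀ + p₁ + p₂) r] at e2
        have hcc : 0 < Φ ((0 : WeakDual ℝ X), (1 : ℝ)) := by nlinarith
        have hccne : Φ ((0 : WeakDual ℝ X), (1 : ℝ)) ≠ 0 := ne_of_gt hcc
        obtain ⟨xh, hxh⟩ := weakdual_repr (Φ.comp (ContinuousLinearMap.inl ℝ (WeakDual ℝ X) ℝ))
        have hxh' : ∀ q : WeakDual ℝ X, Φ (q, 0) = q xh := by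
          intro q
          have h5 := hxh q
          rwa [ContinuousLinearMap.comp_apply, ContinuousLinearMap.inl_apply] at h5
        have hqxh : ∀ q : WeakDual ℝ X,
            q xh = -(Φ ((0 : WeakDual ℝ X), (1 : ℝ))) *
              q ((-(Φ ((0 : WeakDual ℝ X), (1 : ℝ)))⁻¹) • xh) := by
          intro q
          rw [map_smul, smul_eq_mul]
          field_simp
        set xb : X := (-(Φ ((0 : WeakDual ℝ X), (1 : ℝ)))⁻¹) • xh with hxb
        have hβ : ∀ z ∈ epiFn (conjFn g) + charCone C f,
            z.1 xb - z.2 < -u / Φ ((0 : WeakDual ℝ X), (1 : ℝ)) := by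
          intro z hz
          have h1 : u < Φ (z.1, z.2) := hEineq z hz
          rw [phi_decomp Φ z.1 z.2, hxh' z.1, hqxh z.1] at h1
          rw [lt_div_iff₀ hcc]
          nlinarith
        obtain ⟨q₀, s₀, hq₀⟩ := exists_conj_point hg
        have hKineq : ∀ z ∈ charCone C f, z.1 xb ≤ z.2 := by
          intro z hz
          by_contra hlt
          push_neg at hlt
          have hd : 0 < z.1 xb - z.2 := by linarith
          obtain ⟨T, hT⟩ : ∃ T : ℝ,
              T = (-u / Φ ((0 : WeakDual ℝ X), (1 : ℝ)) - (q₀ xb - s₀)) / (z.1 xb - z.2) :=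
            ⟨_, rfl⟩
          obtain ⟨t₀, ht₀0, ht₀⟩ : ∃ t₀ : ℝ, 0 ≤ t₀ ∧ T < t₀ :=
            ⟨max 0 T + 1, by linarith [le_max_left (0:ℝ) T], by linarith [le_max_right (0:ℝ) T]⟩
          rw [hT, div_lt_iff₀ hd] at ht₀
          have hmem : ((q₀, s₀) + t₀ • z : WeakDual ℝ X × ℝ) ∈
              epiFn (conjFn g) + charCone C f :=
            Set.add_mem_add hq₀ (coneGen_smul_mem ht₀0 hz)
          have h6 := hβ _ hmem
          have happ1 : ((q₀, s₀) + t₀ • z).1 xb = q₀ xb + t₀ * z.1 xb := by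
            simp [Prod.fst_add, Prod.smul_fst]
          have happ2 : ((q₀, s₀) + t₀ • z).2 = s₀ + t₀ * z.2 := by
            simp [Prod.snd_add, Prod.smul_snd]
          rw [happ1, happ2] at h6
          nlinarith
        have hxbC : xb ∈ C := by
          by_contra hnot
          have hind : ((0 : ℝ) : EReal) < indicatorE C xb := by
            have h11 : indicatorE C xb = ⊤ := by simp [indicatorE, hnot]
            rw [h11]
            exact EReal.coe_lt_top 0
          obtain ⟨q, s, hqs, hgt⟩ :=
            exists_conj_minorant (indicator_inGamma hCne hCcl hCcv) xb 0 hind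
          have hmem : ((q, s) : WeakDual ℝ X × ℝ) ∈ charCone C f :=
            subset_coneGen (Or.inl hqs)
          have h7 : q xb ≤ s := hKineq _ hmem
          linarith
        have hxbf : ∀ i, f i xb ≤ (0 : EReal) := by
          intro i
          by_contra hnot
          push_neg at hnot
          have h8 : ((0 : ℝ) : EReal) < f i xb := by exact_mod_cast hnot
          obtain ⟨q, s, hqs, hgt⟩ := exists_conj_minorant (hf i) xb 0 h8
          have hmem : ((q, s) : WeakDual ℝ X × ℝ) ∈ charCone C f :=
            subset_coneGen (Or.inr (Set.mem_iUnion.2 ⟨i, hqs⟩))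
          have h7 : q xb ≤ s := hKineq _ hmem
          linarith
        have hxbg : g xb < ⊤ := by
          by_contra hnot
          push_neg at hnot
          have htop : g xb = ⊤ := top_le_iff.1 hnot
          have h9 : ((-u / Φ ((0 : WeakDual ℝ X), (1 : ℝ)) : ℝ) : EReal) < g xb := by
            rw [htop]; exact EReal.coe_lt_top _
          obtain ⟨q, s, hqs, hgt⟩ := exists_conj_minorant hg xb _ h9
          have hmem : ((q, s) + ((0 : WeakDual ℝ X × ℝ)) : WeakDual ℝ X × ℝ) ∈
              epiFn (conjFn g) + charCone C f :=
            Set.add_mem_add hqs coneGen_zero_mem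
          rw [add_zero] at hmem
          have h10 := hβ _ hmem
          linarith
        exact (Set.eq_empty_iff_forall_notMem.1 hempty xb) ⟨⟨hxbC, hxbf⟩, hxbg⟩
      calc (closure (domFn (conjFn g) + coneGen (⋃ i, domFn (conjFn (f i))) + barCone C)) ×ˢ
            (Set.univ : Set ℝ)
          = closure ((domFn (conjFn g) + coneGen (⋃ i, domFn (conjFn (f i))) + barCone C) ×ˢ
              (Set.univ : Set ℝ)) := by rw [closure_prod_eq, closure_univ]
        _ ⊆ closure (closure (epiFn (conjFn g) + charCone C f)) := closure_mono key
        _ = closure (epiFn (conjFn g) + charCone C f) := closure_closure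
  · intro heq
    rw [Set.eq_empty_iff_forall_notMem]
    rintro a ⟨haSol, haDom⟩
    obtain ⟨ga, hga⟩ : ∃ rr : ℝ, g a = (rr : EReal) :=
      ⟨(g a).toReal, (EReal.coe_toReal (ne_of_lt haDom) (hg.1 a)).symm⟩
    have hHalf : epiFn (conjFn g) + charCone C f ⊆
        {z : WeakDual ℝ X × ℝ | z.1 a - z.2 ≤ ga} := by
      rintro z ⟨z₁, hz₁, z₂, hz₂, rfl⟩
      have h1 : z₁.1 a ≤ ga + z₁.2 := by
        have h2 := (mem_epi_conj_iff hg.1 z₁.1 z₁.2).1 hz₁ a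
        rw [hga, ← EReal.coe_add, EReal.coe_le_coe_iff] at h2
        exact h2
      have h3 := charCone_le hCne hCcl hCcv hf haSol z₂ hz₂
      show (z₁ + z₂).1 a - (z₁ + z₂).2 ≤ ga
      have h4 : (z₁ + z₂).1 a = z₁.1 a + z₂.1 a := by
        rw [Prod.fst_add, wd_add_apply]
      have h5 : (z₁ + z₂).2 = z₁.2 + z₂.2 := rfl
      rw [h4, h5]
      linarith
    have hcl : closure (epiFn (conjFn g) + charCone C f) ⊆
        {z : WeakDual ℝ X × ℝ | z.1 a - z.2 ≤ ga} :=
      closure_minimal hHalf (isClosed_le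
        (((WeakDual.eval_continuous a).comp continuous_fst).sub continuous_snd)
        continuous_const)
    obtain ⟨q₀, s₀, hq₀⟩ := exists_conj_point hg
    have hq₀dom : q₀ ∈ domFn (conjFn g) := lt_of_le_of_lt hq₀ (EReal.coe_lt_top s₀)
    obtain ⟨hbar0, -, -⟩ := barCone_ops (X := X) hCne hCcl hCcv
    have hpD : q₀ ∈ domFn (conjFn g) + coneGen (⋃ i, domFn (conjFn (f i))) + barCone C := by
      have h6 : q₀ + 0 + 0 = q₀ := by rw [add_zero, add_zero]
      rw [← h6]
      exact Set.add_mem_add (Set.add_mem_add hq₀dom coneGen_zero_mem) hbar0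
    have hmem : ((q₀, q₀ a - ga - 1) : WeakDual ℝ X × ℝ) ∈
        (closure (domFn (conjFn g) + coneGen (⋃ i, domFn (conjFn (f i))) + barCone C)) ×ˢ
          (Set.univ : Set ℝ) := ⟨subset_closure hpD, trivial⟩
    rw [← heq] at hmem
    have h7 := hcl hmem
    simp only [Set.mem_setOf_eq] at h7
    linarith
end
end

section
/- (On the failure of the hidden assumption.) Let f ∈ Γ(X) with A ∩ dom f = ∅ and let x* ∈ X*. Then the following are equivalent: (i) epi (f + δ_A)* ∩ ({x*}×ℝ) ≠ w*-cl(epi f* + K) ∩ ({x*}×ℝ); (ii) {x*}×ℝ is not contained in w*-cl(epi f* + K); (iii) x* ∉ w*-cl(dom f* + cone Ω + barr C); (iv) there exists d ∈ ⋂_{i∈I} [f_i^∞ ≤ 0] ∩ C^∞ such that f^∞(d) < ⟨x*, d⟩. -/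
open Pointwise

noncomputable section

variable {X : Type*} [AddCommGroup X] [Module ℝ X] [TopologicalSpace X]

/-! ### Auxiliary lemmas -/

open Filter Set Topology

section AuxBasic
variable {X : Type*} [AddCommGroup X] [Module ℝ X] [TopologicalSpace X]

noncomputable instance : LocallyConvexSpace ℝ (WeakDual ℝ X) :=
  WeakBilin.locallyConvexSpace (B := topDualPairing ℝ X)

lemma wadd (q q' : WeakDual ℝ X) (x : X) : (q + q') x = q x + q' x := rfl
lemma wsmul (c : ℝ) (q : WeakDual ℝ X) (x : X) : (c • q) x = c * q x := rfl
lemma wzero (x : X) : (0 : WeakDual ℝ X) x = 0 := rfl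

lemma exists_real_ge {v : EReal} (h : v < ⊤) : ∃ M : ℝ, v ≤ (M : EReal) := by
  induction v with
  | bot => exact ⟨0, bot_le⟩
  | coe r => exact ⟨r, le_refl _⟩
  | top => exact absurd h (lt_irrefl _)

lemma ereal_trich (v : EReal) : v = ⊥ ∨ (∃ r : ℝ, v = (r : EReal)) ∨ v = ⊤ := by
  induction v with
  | bot => exact Or.inl rfl
  | coe r => exact Or.inr (Or.inl ⟨r, rfl⟩)
  | top => exact Or.inr (Or.inr rfl)

lemma conjFn_le_coe {h : X → EReal} {q : WeakDual ℝ X} {M : ℝ} :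
    conjFn h q ≤ (M : EReal) ↔ ∀ x, (q x : EReal) - h x ≤ (M : EReal) := iSup_le_iff

lemma le_conjFn (h : X → EReal) (q : WeakDual ℝ X) (x : X) :
    (q x : EReal) - h x ≤ conjFn h q :=
  le_iSup (fun x : X => (q x : EReal) - h x) x

lemma mem_domFn_conjFn {h : X → EReal} {q : WeakDual ℝ X} :
    q ∈ domFn (conjFn h) ↔ ∃ M : ℝ, ∀ x, (q x : EReal) - h x ≤ (M : EReal) := by
  constructor
  · intro hq
    obtain ⟨M, hM⟩ := exists_real_ge hq
    exact ⟨M, fun x => le_trans (le_conjFn h q x) hM⟩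
  · rintro ⟨M, hM⟩
    exact lt_of_le_of_lt (conjFn_le_coe.2 hM) (EReal.coe_lt_top M)

lemma sub_indicator_of_mem {C : Set X} {x : X} (hx : x ∈ C) (v : EReal) :
    v - indicatorE C x = v := by
  simp [indicatorE, hx]

lemma sub_indicator_of_not_mem {C : Set X} {x : X} (hx : x ∉ C) {v : ℝ} :
    (v : EReal) - indicatorE C x = ⊥ := by
  simp only [indicatorE, if_neg hx]
  exact EReal.sub_top _

lemma mem_barCone {C : Set X} {q : WeakDual ℝ X} :
    q ∈ barCone C ↔ ∃ M : ℝ, ∀ x ∈ C, q x ≤ M := by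
  rw [barCone, mem_domFn_conjFn]
  constructor
  · rintro ⟨M, hM⟩
    refine ⟨M, fun x hx => ?_⟩
    have h1 := hM x
    rw [sub_indicator_of_mem hx] at h1
    exact_mod_cast h1
  · rintro ⟨M, hM⟩
    refine ⟨M, fun x => ?_⟩
    by_cases hx : x ∈ C
    · rw [sub_indicator_of_mem hx]; exact_mod_cast hM x hx
    · rw [sub_indicator_of_not_mem hx]; exact bot_le

lemma zero_mem_barCone {C : Set X} : (0 : WeakDual ℝ X) ∈ barCone C :=
  mem_barCone.2 ⟨0, fun x _ => le_of_eq (wzero x)⟩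

lemma barCone_smul {C : Set X} {t : ℝ} (ht : 0 ≤ t) {q : WeakDual ℝ X}
    (hq : q ∈ barCone C) : t • q ∈ barCone C := by
  obtain ⟨M, hM⟩ := mem_barCone.1 hq
  refine mem_barCone.2 ⟨t * max M 0, fun x hx => ?_⟩
  rw [wsmul]
  exact mul_le_mul_of_nonneg_left (le_trans (hM x hx) (le_max_left _ _)) ht

lemma barCone_add {C : Set X} {q q' : WeakDual ℝ X}
    (hq : q ∈ barCone C) (hq' : q' ∈ barCone C) : q + q' ∈ barCone C := by
  obtain ⟨M, hM⟩ := mem_barCone.1 hq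
  obtain ⟨M', hM'⟩ := mem_barCone.1 hq'
  refine mem_barCone.2 ⟨M + M', fun x hx => ?_⟩
  rw [wadd]
  exact add_le_add (hM x hx) (hM' x hx)

lemma barCone_convex {C : Set X} : Convex ℝ (barCone C) := by
  intro q hq q' hq' a b ha hb _
  exact barCone_add (barCone_smul ha hq) (barCone_smul hb hq')

end AuxBasic

section ConeGenLemmas
variable {V : Type*} [AddCommGroup V] [Module ℝ V]

lemma zero_mem_coneGen (D : Set V) : (0 : V) ∈ coneGen D := Or.inl rfl

lemma subset_coneGen (D : Set V) : D ⊆ coneGen D := fun x hx =>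
  Or.inr ⟨1, zero_le_one, x, subset_convexHull ℝ D hx, (one_smul ℝ x).symm⟩

lemma coneGen_smul {D : Set V} {t : ℝ} (ht : 0 ≤ t) {x : V} (hx : x ∈ coneGen D) :
    t • x ∈ coneGen D := by
  rcases hx with h0 | ⟨s, hs, z, hz, rfl⟩
  · rw [Set.mem_singleton_iff] at h0; subst h0; rw [smul_zero]; exact zero_mem_coneGen D
  · exact Or.inr ⟨t * s, mul_nonneg ht hs, z, hz, smul_smul t s z⟩

lemma coneGen_add {D : Set V} {x y : V} (hx : x ∈ coneGen D) (hy : y ∈ coneGen D) :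
    x + y ∈ coneGen D := by
  rcases hx with h0 | ⟨t, ht, z, hz, rfl⟩
  · rw [Set.mem_singleton_iff] at h0; subst h0; rw [zero_add]; exact hy
  rcases hy with h0 | ⟨s, hs, w, hw, rfl⟩
  · rw [Set.mem_singleton_iff] at h0; subst h0; rw [add_zero]; exact Or.inr ⟨t, ht, z, hz, rfl⟩
  rcases eq_or_lt_of_le (add_nonneg ht hs : (0:ℝ) ≤ t + s) with hts | hts
  · have ht0 : t = 0 := by linarith
    have hs0 : s = 0 := by linarith
    subst ht0; subst hs0
    rw [zero_smul, zero_smul, add_zero]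
    exact zero_mem_coneGen D
  · refine Or.inr ⟨t + s, le_of_lt hts, (t / (t + s)) • z + (s / (t + s)) • w, ?_, ?_⟩
    · exact (convex_convexHull ℝ D) hz hw (by positivity) (by positivity) (by field_simp)
    · rw [smul_add, smul_smul, smul_smul]
      congr 2 <;> field_simp

lemma coneGen_convex {D : Set V} : Convex ℝ (coneGen D) := fun _ hx _ hy a b ha hb _ =>
  coneGen_add (coneGen_smul ha hx) (coneGen_smul hb hy)

end ConeGenLemmas

section RecConeLemmas
variable {X : Type*} [AddCommGroup X] [Module ℝ X] [TopologicalSpace X]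

lemma zero_mem_recCone {C : Set X} : (0 : X) ∈ recCone C := by
  intro a ha t _
  rw [Set.mem_smul_set]
  exact ⟨a - a, Set.sub_mem_sub ha rfl, by rw [sub_self, smul_zero]⟩

lemma recCone_eval_nonpos {C : Set X} (hCne : C.Nonempty) {d : X} {q : WeakDual ℝ X}
    (hd : d ∈ recCone C) (hq : q ∈ barCone C) : q d ≤ 0 := by
  obtain ⟨M, hM⟩ := mem_barCone.1 hq
  obtain ⟨a, ha⟩ := hCne
  by_contra hpos
  push_neg at hpos
  set m := max (M - q a) 1 with hm
  have hmpos : (0:ℝ) < m := lt_of_lt_of_le one_pos (le_max_right _ _)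
  set t := q d / (2 * m) with htdef
  have ht : 0 < t := div_pos hpos (by positivity)
  obtain ⟨y, hy, hyd⟩ := Set.mem_smul_set.1 (hd a ha t ht)
  obtain ⟨b, hb, a'', ha'', hba⟩ := Set.mem_sub.1 hy
  rw [Set.mem_singleton_iff] at ha''
  have hqd : q d = t * (q b - q a) := by
    rw [← hyd, ← hba, ha'', map_smul, map_sub, smul_eq_mul]
  have hfact : t * (2 * m) = q d := div_mul_cancel₀ _ (by positivity)
  nlinarith [mul_nonneg ht.le (sub_nonneg.2 (hM b hb)),
    mul_nonneg ht.le (sub_nonneg.2 (le_max_left (M - q a) 1))]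

lemma mem_recCone_of_eval_nonpos [IsTopologicalAddGroup X] [ContinuousSMul ℝ X]
    [LocallyConvexSpace ℝ X] {C : Set X} (hCcl : IsClosed C) (hCcv : Convex ℝ C)
    {d : X} (H : ∀ q ∈ barCone C, q d ≤ 0) : d ∈ recCone C := by
  intro a ha t ht
  have hmem : a + t⁻¹ • d ∈ C := by
    by_contra hnot
    obtain ⟨f, u, hfu, huf⟩ := geometric_hahn_banach_closed_point hCcv hCcl hnot
    have hfbar : (f : WeakDual ℝ X) ∈ barCone C := mem_barCone.2 ⟨u, fun x hx => (hfu x hx).le⟩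
    have hfd : f d ≤ 0 := H _ hfbar
    have heq : f (a + t⁻¹ • d) = f a + t⁻¹ * f d := by rw [map_add, map_smul, smul_eq_mul]
    have h1 := hfu a ha
    have h2 : t⁻¹ * f d ≤ 0 := by
      nlinarith [mul_nonneg (inv_nonneg.2 ht.le) (neg_nonneg.2 hfd)]
    rw [heq] at huf
    linarith
  rw [Set.mem_smul_set]
  refine ⟨(a + t⁻¹ • d) - a, Set.sub_mem_sub hmem rfl, ?_⟩
  rw [add_sub_cancel_left, smul_smul, mul_inv_cancel₀ (ne_of_gt ht), one_smul]

end RecConeLemmas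


section SepLemmas
variable {X : Type*} [AddCommGroup X] [Module ℝ X] [TopologicalSpace X]

lemma clm_decomp {V : Type*} [AddCommGroup V] [Module ℝ V] [TopologicalSpace V]
    (F : V × ℝ →L[ℝ] ℝ) (x : V) (t : ℝ) : F (x, t) = F (x, 0) + t * F (0, 1) := by
  have h1 : ((x, t) : V × ℝ) = (x, 0) + t • ((0 : V), (1 : ℝ)) := by
    simp [Prod.ext_iff]
  rw [h1, map_add, map_smul, smul_eq_mul]

/-- evaluation at a point, as a linear map on the weak dual -/
noncomputable def evalLM (x : X) : WeakDual ℝ X →ₗ[ℝ] ℝ where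
  toFun q := q x
  map_add' _ _ := rfl
  map_smul' _ _ := rfl

/-- Every continuous linear functional on the weak-* dual is evaluation at a point. -/
theorem weakdual_rep (φ : WeakDual ℝ X →L[ℝ] ℝ) : ∃ d : X, ∀ q : WeakDual ℝ X, φ q = q d := by
  have h0 : φ ⁻¹' (Set.Ioo (-1 : ℝ) 1) ∈ 𝓝 (0 : WeakDual ℝ X) := by
    have htd := φ.continuous.tendsto (0 : WeakDual ℝ X)
    apply htd
    rw [map_zero]
    exact Ioo_mem_nhds (by norm_num) (by norm_num)
  erw [nhds_induced] at h0
  obtain ⟨U, hU, hUsub⟩ := Filter.mem_comap.1 h0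
  have h00 : (fun y => ((topDualPairing ℝ X) 0) y) = (0 : X → ℝ) := by
    funext x; simp
  erw [h00, nhds_pi] at hU
  obtain ⟨I, hIfin, t, ht, htsub⟩ := Filter.mem_pi.1 hU
  have key : ∀ q : WeakDual ℝ X, (∀ x ∈ I, q x = 0) → φ q = 0 := by
    intro q hq
    by_contra hne
    have hc : ∀ c : ℝ, c • q ∈ φ ⁻¹' (Set.Ioo (-1 : ℝ) 1) := by
      intro c
      apply hUsub
      apply htsub
      intro x hx
      show ((topDualPairing ℝ X) (c • q)) x ∈ t x
      have hz : (c • q) x = 0 := by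
        have h1 : (c • q) x = c * q x := rfl
        rw [h1, hq x hx, mul_zero]
      have hz' : ((topDualPairing ℝ X) (c • q)) x = 0 := hz
      rw [hz']
      exact mem_of_mem_nhds (ht x)
    have h2 := (hc ((φ q)⁻¹)).2
    rw [map_smul, smul_eq_mul, inv_mul_cancel₀ hne] at h2
    exact absurd h2 (lt_irrefl _)
  haveI : Finite I := hIfin.to_subtype
  have hker : ⨅ i : I, LinearMap.ker (evalLM (X := X) (i : X)) ≤
      LinearMap.ker (φ : WeakDual ℝ X →ₗ[ℝ] ℝ) := by
    intro q hq
    simp only [Submodule.mem_iInf, LinearMap.mem_ker] at hq ⊢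
    exact key q fun x hx => hq ⟨x, hx⟩
  have hspan := mem_span_of_iInf_ker_le_ker hker
  haveI : Fintype I := hIfin.fintype
  rw [Submodule.mem_span_range_iff_exists_fun] at hspan
  obtain ⟨c, hc⟩ := hspan
  refine ⟨∑ i : I, c i • (i : X), fun q => ?_⟩
  have h3 := congrArg (fun (L : WeakDual ℝ X →ₗ[ℝ] ℝ) => L q) hc
  simp only [LinearMap.coe_sum, Finset.sum_apply, LinearMap.smul_apply] at h3
  rw [ContinuousLinearMap.coe_coe] at h3
  rw [← h3, map_sum]
  congr 1
  funext i
  rw [map_smul]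
  rfl

lemma isClosed_epiFn {h : X → EReal} (hl : LowerSemicontinuous h) : IsClosed (epiFn h) := by
  have h1 : IsClosed {p : X × EReal | h p.1 ≤ p.2} :=
    lowerSemicontinuous_iff_isClosed_epigraph.1 hl
  have h2 : epiFn h =
      (fun q : X × ℝ => (q.1, (q.2 : EReal))) ⁻¹' {p : X × EReal | h p.1 ≤ p.2} := rfl
  rw [h2]
  exact h1.preimage (continuous_fst.prodMk (continuous_coe_real_ereal.comp continuous_snd))

lemma conjFn_le_of_bound {h : X → EReal} (hbot : ∀ x, h x ≠ ⊥) {w : WeakDual ℝ X} {s : ℝ}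
    (H : ∀ (x : X) (t : ℝ), h x ≤ (t : EReal) → w x ≤ s + t) : conjFn h w ≤ (s : EReal) := by
  rw [conjFn_le_coe]
  intro x
  rcases ereal_trich (h x) with hx | ⟨r, hx⟩ | hx
  · exact absurd hx (hbot x)
  · rw [hx, ← EReal.coe_sub, EReal.coe_le_coe_iff]
    have := H x r (le_of_eq hx)
    linarith
  · rw [hx, EReal.sub_top]
    exact bot_le

lemma bound_of_conjFn_le {h : X → EReal} {w : WeakDual ℝ X} {s : ℝ}
    (H : conjFn h w ≤ (s : EReal)) :
    ∀ (x : X) (t : ℝ), h x ≤ (t : EReal) → w x ≤ s + t := by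
  intro x t hxt
  have hle := le_trans (le_conjFn h w x) H
  rcases ereal_trich (h x) with hx | ⟨r, hx⟩ | hx
  · rw [hx, EReal.coe_sub_bot] at hle
    exact absurd hle (by simp)
  · rw [hx, ← EReal.coe_sub, EReal.coe_le_coe_iff] at hle
    rw [hx, EReal.coe_le_coe_iff] at hxt
    linarith
  · rw [hx] at hxt
    exact absurd hxt (by simp)

lemma convex_epiFn_conjFn {h : X → EReal} (hbot : ∀ x, h x ≠ ⊥) :
    Convex ℝ (epiFn (conjFn h)) := by
  rintro ⟨q₁, s₁⟩ h₁ ⟨q₂, s₂⟩ h₂ a b ha hb hab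
  have hb₁ := bound_of_conjFn_le (show conjFn h q₁ ≤ (s₁ : EReal) from h₁)
  have hb₂ := bound_of_conjFn_le (show conjFn h q₂ ≤ (s₂ : EReal) from h₂)
  show conjFn h (a • q₁ + b • q₂) ≤ ((a • s₁ + b • s₂ : ℝ) : EReal)
  apply conjFn_le_of_bound hbot
  intro x t hxt
  have e1 : (a • q₁ + b • q₂) x = a * q₁ x + b * q₂ x := rfl
  rw [e1]
  have i1 := mul_le_mul_of_nonneg_left (hb₁ x t hxt) ha
  have i2 := mul_le_mul_of_nonneg_left (hb₂ x t hxt) hb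
  simp only [smul_eq_mul]
  have i3 : a * t + b * t = t := by rw [← add_mul, hab, one_mul]
  linarith

lemma domFn_conjFn_convex {h : X → EReal} (hbot : ∀ x, h x ≠ ⊥) :
    Convex ℝ (domFn (conjFn h)) := by
  intro q₁ h₁ q₂ h₂ a b ha hb hab
  obtain ⟨M₁, hM₁⟩ := exists_real_ge h₁
  obtain ⟨M₂, hM₂⟩ := exists_real_ge h₂
  have hmem1 : ((q₁, M₁) : WeakDual ℝ X × ℝ) ∈ epiFn (conjFn h) := hM₁
  have hmem2 : ((q₂, M₂) : WeakDual ℝ X × ℝ) ∈ epiFn (conjFn h) := hM₂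
  have hcombo := convex_epiFn_conjFn hbot hmem1 hmem2 ha hb hab
  have h3 : conjFn h (a • q₁ + b • q₂) ≤ ((a • M₁ + b • M₂ : ℝ) : EReal) := hcombo
  exact lt_of_le_of_lt h3 (EReal.coe_lt_top _)

lemma conj_of_sep {h : X → EReal} (hbot : ∀ x, h x ≠ ⊥) {F : X × ℝ →L[ℝ] ℝ} {u : ℝ}
    (hFlt : ∀ a ∈ epiFn h, F a < u) (hc : F (0, 1) < 0) :
    conjFn h ((-(F (0, 1)))⁻¹ • ((F.comp (ContinuousLinearMap.inl ℝ X ℝ)) : WeakDual ℝ X))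
      ≤ (((-(F (0, 1)))⁻¹ * u : ℝ) : EReal) := by
  apply conjFn_le_of_bound hbot
  intro x t hxt
  have h2 := hFlt (x, t) hxt
  rw [clm_decomp] at h2
  have h3 : ((-(F (0, 1)))⁻¹ • ((F.comp (ContinuousLinearMap.inl ℝ X ℝ)) : WeakDual ℝ X)) x
      = (-(F (0, 1)))⁻¹ * F (x, 0) := rfl
  change (-(F (0, 1)))⁻¹ * F (x, 0) ≤ _
  have hcpos : 0 < -(F (0, 1)) := by linarith
  have hc0 : F (0, 1) ≠ 0 := ne_of_lt hc
  have h5 : (-(F (0, 1)))⁻¹ * (F (x, 0) + t * F (0, 1))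
      = (-(F (0, 1)))⁻¹ * F (x, 0) - t := by
    field_simp <;> ring
  have h4 : (-(F (0, 1)))⁻¹ * (F (x, 0) + t * F (0, 1)) ≤ (-(F (0, 1)))⁻¹ * u :=
    mul_le_mul_of_nonneg_left h2.le (by positivity)
  rw [h5] at h4
  linarith

variable [IsTopologicalAddGroup X] [ContinuousSMul ℝ X] [LocallyConvexSpace ℝ X]

/-- Lemma A: the epigraph of the conjugate of a Γ-function is nonempty. -/
lemma epi_conj_nonempty {h : X → EReal} (hbot : ∀ x, h x ≠ ⊥) (hne : ∃ x₀, h x₀ ≠ ⊤)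
    (hcl : IsClosed (epiFn h)) (hcv : Convex ℝ (epiFn h)) :
    ∃ (w : WeakDual ℝ X) (s : ℝ), conjFn h w ≤ (s : EReal) := by
  obtain ⟨x₀, hx₀⟩ := hne
  obtain ⟨m, hm⟩ : ∃ m : ℝ, h x₀ = (m : EReal) := by
    rcases ereal_trich (h x₀) with hx | ⟨r, hx⟩ | hx
    · exact absurd hx (hbot x₀)
    · exact ⟨r, hx⟩
    · exact absurd hx hx₀
  have hpt : ((x₀, m - 1) : X × ℝ) ∉ epiFn h := by
    intro hcmem
    have h1 : h x₀ ≤ ((m - 1 : ℝ) : EReal) := hcmem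
    rw [hm, EReal.coe_le_coe_iff] at h1
    linarith
  obtain ⟨F, u, hFlt, hFgt⟩ := geometric_hahn_banach_closed_point hcv hcl hpt
  have hmem : ((x₀, m) : X × ℝ) ∈ epiFn h := le_of_eq hm
  have h1 := hFlt _ hmem
  rw [clm_decomp] at h1 hFgt
  have hc : F (0, 1) < 0 := by nlinarith
  exact ⟨_, _, conj_of_sep hbot hFlt hc⟩

/-- Lemma B: pointwise bound from conjugate bounds (Fenchel–Moreau style). -/
lemma le_of_conj_bounds {h : X → EReal} (hbot : ∀ x, h x ≠ ⊥) (hne : ∃ x₀, h x₀ ≠ ⊤)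
    (hcl : IsClosed (epiFn h)) (hcv : Convex ℝ (epiFn h)) {xb : X} {rb : ℝ}
    (H : ∀ (w : WeakDual ℝ X) (s : ℝ), conjFn h w ≤ (s : EReal) → w xb ≤ s + rb) :
    h xb ≤ (rb : EReal) := by
  by_contra hgt
  push_neg at hgt
  have hpt : ((xb, rb) : X × ℝ) ∉ epiFn h := fun hcm =>
    absurd (hcm : h xb ≤ (rb : EReal)) hgt.not_ge
  obtain ⟨F, u, hFlt, hFgt⟩ := geometric_hahn_banach_closed_point hcv hcl hpt
  obtain ⟨x₀, hx₀⟩ := hne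
  obtain ⟨m, hm⟩ : ∃ m : ℝ, h x₀ = (m : EReal) := by
    rcases ereal_trich (h x₀) with hx | ⟨r, hx⟩ | hx
    · exact absurd hx (hbot x₀)
    · exact ⟨r, hx⟩
    · exact absurd hx hx₀
  have hmem0 : ∀ n : ℕ, ((x₀, m + n) : X × ℝ) ∈ epiFn h := by
    intro n
    show h x₀ ≤ ((m + n : ℝ) : EReal)
    rw [hm, EReal.coe_le_coe_iff]
    have : (0:ℝ) ≤ n := Nat.cast_nonneg n
    linarith
  have hcle : F (0, 1) ≤ 0 := by
    by_contra hcpos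
    push_neg at hcpos
    obtain ⟨n, hn⟩ := exists_nat_gt ((u - F (x₀, 0) - m * F (0, 1)) / F (0, 1))
    have h1 := hFlt _ (hmem0 n)
    rw [clm_decomp] at h1
    have h2 := (div_lt_iff₀ hcpos).1 hn
    nlinarith
  rcases eq_or_lt_of_le hcle with heq | hclt
  · -- c = 0 case
    obtain ⟨w₀, s₀, hw₀⟩ := epi_conj_nonempty hbot ⟨x₀, hx₀⟩ hcl hcv
    set φ : WeakDual ℝ X := (F.comp (ContinuousLinearMap.inl ℝ X ℝ) : X →L[ℝ] ℝ) with hφdef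
    have hφeq : ∀ (x : X) (r : ℝ), F (x, r) = φ x := by
      intro x r
      have hd := clm_decomp F x r
      rw [heq, mul_zero, add_zero] at hd
      exact hd
    have hφlt : ∀ (x : X) (r : ℝ), h x ≤ (r : EReal) → φ x < u := by
      intro x r hxr
      have := hFlt (x, r) hxr
      rwa [hφeq] at this
    have hfam : ∀ t : ℝ, 0 ≤ t → w₀ xb + t * φ xb ≤ s₀ + t * u + rb := by
      intro t htn
      have hconj : conjFn h (w₀ + t • φ) ≤ ((s₀ + t * u : ℝ) : EReal) := by
        apply conjFn_le_of_bound hbot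
        intro x r hxr
        have e1 : (w₀ + t • φ) x = w₀ x + t * φ x := rfl
        rw [e1]
        have b1 := bound_of_conjFn_le hw₀ x r hxr
        have b2 := mul_le_mul_of_nonneg_left (hφlt x r hxr).le htn
        linarith
      have hHt := H _ _ hconj
      have e2 : (w₀ + t • φ) xb = w₀ xb + t * φ xb := rfl
      rw [e2] at hHt
      linarith
    have hgtu : u < φ xb := by rw [← hφeq xb rb]; exact hFgt
    have h0 := hfam 0 le_rfl
    have hden : 0 < φ xb - u := by linarith
    set t := (s₀ + rb - w₀ xb + 1) / (φ xb - u) with htdef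
    have htn : 0 ≤ t := div_nonneg (by linarith) hden.le
    have hfmt := hfam t htn
    have hmul : t * (φ xb - u) = s₀ + rb - w₀ xb + 1 := div_mul_cancel₀ _ (ne_of_gt hden)
    nlinarith
  · -- c < 0 case
    have hH := H _ _ (conj_of_sep hbot hFlt hclt)
    have h3 : ((-(F (0, 1)))⁻¹ • ((F.comp (ContinuousLinearMap.inl ℝ X ℝ)) : WeakDual ℝ X)) xb
        = (-(F (0, 1)))⁻¹ * F (xb, 0) := rfl
    change (-(F (0, 1)))⁻¹ * F (xb, 0) ≤ _ at hH
    have hcpos : 0 < -(F (0, 1)) := by linarith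
    have hc0 : F (0, 1) ≠ 0 := ne_of_lt hclt
    have h6 := mul_le_mul_of_nonneg_left hH hcpos.le
    have e1 : (-(F (0, 1))) * ((-(F (0, 1)))⁻¹ * F (xb, 0)) = F (xb, 0) := by
      field_simp
    have e2 : (-(F (0, 1))) * ((-(F (0, 1)))⁻¹ * u + rb)
        = u + rb * (-(F (0, 1))) := by
      field_simp <;> ring
    rw [e1, e2] at h6
    rw [clm_decomp] at hFgt
    nlinarith

end SepLemmas


section MainLemmas
variable {X : Type*} [AddCommGroup X] [Module ℝ X] [TopologicalSpace X]
  [IsTopologicalAddGroup X] [ContinuousSMul ℝ X] [LocallyConvexSpace ℝ X]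
  {I : Type*} {C : Set X} {f : I → X → EReal} {g : X → EReal}

lemma indicatorE_ne_bot (C : Set X) (x : X) : indicatorE C x ≠ ⊥ := by
  unfold indicatorE
  split <;> simp

lemma indicatorE_ne_top (hCne : C.Nonempty) : ∃ x, indicatorE C x ≠ ⊤ := by
  obtain ⟨a, ha⟩ := hCne
  exact ⟨a, by simp [indicatorE, ha]⟩

lemma epiFn_indicatorE : epiFn (indicatorE C) = C ×ˢ Set.Ici (0 : ℝ) := by
  ext ⟨x, r⟩
  simp only [epiFn, Set.mem_setOf_eq, Set.mem_prod, Set.mem_Ici, indicatorE]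
  by_cases hx : x ∈ C
  · rw [if_pos hx]
    simp only [hx, true_and]
    exact EReal.coe_nonneg
  · simp only [if_neg hx]
    constructor
    · intro h1; exact absurd h1 (by simp)
    · intro h1; exact absurd h1.1 hx

lemma mem_of_indicatorE_le_zero {x : X} (h : indicatorE C x ≤ ((0 : ℝ) : EReal)) :
    x ∈ C := by
  by_contra hx
  rw [show indicatorE C x = ⊤ from if_neg hx] at h
  exact absurd h (by simp)

lemma W_add_K {k : WeakDual ℝ X × ℝ} (hk : k ∈ charCone C f)
    {w : WeakDual ℝ X × ℝ} (hw : w ∈ closure (epiFn (conjFn g) + charCone C f)) :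
    w + k ∈ closure (epiFn (conjFn g) + charCone C f) := by
  have hcont : Continuous fun y : WeakDual ℝ X × ℝ => y + k :=
    continuous_id.add continuous_const
  have himg := image_closure_subset_closure_image (f := fun y => y + k) hcont
      (s := epiFn (conjFn g) + charCone C f)
  have hmem : w + k ∈ (fun y => y + k) '' closure (epiFn (conjFn g) + charCone C f) :=
    ⟨w, hw, rfl⟩
  have hsub : (fun y : WeakDual ℝ X × ℝ => y + k) '' (epiFn (conjFn g) + charCone C f)
      ⊆ epiFn (conjFn g) + charCone C f := by
    rintro _ ⟨z, hz, rfl⟩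
    obtain ⟨e, he, k', hk', rfl⟩ := Set.mem_add.1 hz
    exact Set.mem_add.2 ⟨e, he, k' + k, coneGen_add hk' hk, (add_assoc _ _ _).symm⟩
  exact closure_mono hsub (himg hmem)

lemma vert_mem_charCone (hCne : C.Nonempty) {t : ℝ} (ht : 0 ≤ t) :
    (((0 : WeakDual ℝ X), t) : WeakDual ℝ X × ℝ) ∈ charCone C f := by
  apply subset_coneGen
  left
  show conjFn (indicatorE C) 0 ≤ (t : EReal)
  rw [conjFn_le_coe]
  intro x
  rw [wzero x]
  by_cases hx : x ∈ C
  · rw [sub_indicator_of_mem hx]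
    exact_mod_cast ht
  · rw [sub_indicator_of_not_mem hx]
    exact bot_le

lemma vertical (hCne : C.Nonempty) (hCcl : IsClosed C) (hCcv : Convex ℝ C)
    (hf : ∀ i, InGamma (f i)) (hg : InGamma g) (hA : solSet C f ∩ domFn g = ∅) :
    ∀ z ∈ closure (epiFn (conjFn g) + charCone C f), ∀ r : ℝ,
      ((z.1, r) : WeakDual ℝ X × ℝ) ∈ closure (epiFn (conjFn g) + charCone C f) := by
  have hWcv : Convex ℝ (closure (epiFn (conjFn g) + charCone C f)) :=
    ((convex_epiFn_conjFn hg.1).add coneGen_convex).closure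
  have hdown : ∀ w ∈ closure (epiFn (conjFn g) + charCone C f), ∀ t : ℝ, 0 ≤ t →
      ((w.1, w.2 - t) : WeakDual ℝ X × ℝ) ∈ closure (epiFn (conjFn g) + charCone C f) := by
    intro w hw t ht
    by_contra hnot
    obtain ⟨F, u, hFlt, hFgt⟩ := geometric_hahn_banach_closed_point hWcv isClosed_closure hnot
    have hdec : ∀ (q : WeakDual ℝ X) (s : ℝ), F (q, s) = F (q, 0) + s * F (0, 1) :=
      fun q s => clm_decomp F q s
    have hFw : F w = F (w.1, 0) + w.2 * F (0, 1) := hdec w.1 w.2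
    have hcle : F (0, 1) ≤ 0 := by
      by_contra hcpos
      push_neg at hcpos
      obtain ⟨n, hn⟩ := exists_nat_gt ((u - F w) / F (0, 1))
      have hmem := W_add_K (vert_mem_charCone hCne (Nat.cast_nonneg (α := ℝ) n)) hw
      have hlt := hFlt _ hmem
      have heqw : w + (((0 : WeakDual ℝ X), (n : ℝ)) : WeakDual ℝ X × ℝ)
          = (w.1, w.2 + (n : ℝ)) := by
        simp [Prod.ext_iff]
      rw [heqw, hdec] at hlt
      have h2 := (div_lt_iff₀ hcpos).1 hn
      nlinarith
    have hclt : F (0, 1) < 0 := by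
      rcases lt_or_eq_of_le hcle with hlt0 | heq0
      · exact hlt0
      · exfalso
        have h1 := hFlt w hw
        have h2 : F (w.1, w.2 - t) = F w := by
          rw [hdec w.1 (w.2 - t), hFw, heq0]; ring
        rw [h2] at hFgt
        linarith
    obtain ⟨xb, hxb⟩ := weakdual_rep (F.comp (ContinuousLinearMap.inl ℝ (WeakDual ℝ X) ℝ))
    have hF : ∀ (q : WeakDual ℝ X) (s : ℝ), F (q, s) = q xb + s * F (0, 1) := by
      intro q s
      rw [hdec]
      congr 1
      exact hxb q
    obtain ⟨w₀, s₀, hw₀⟩ := epi_conj_nonempty hg.1 hg.2.1 (isClosed_epiFn hg.2.2.2) hg.2.2.1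
    have hw₀mem : ((w₀, s₀) : WeakDual ℝ X × ℝ) ∈ epiFn (conjFn g) := hw₀
    have hK0 : ∀ k ∈ charCone C f, k.1 xb + k.2 * F (0, 1) ≤ 0 := by
      intro k hk
      by_contra hpos
      push_neg at hpos
      obtain ⟨n, hn⟩ :=
        exists_nat_gt ((u - (w₀ xb + s₀ * F (0, 1))) / (k.1 xb + k.2 * F (0, 1)))
      have hmem : ((w₀, s₀) : WeakDual ℝ X × ℝ) + (n : ℝ) • k ∈
          epiFn (conjFn g) + charCone C f :=
        Set.mem_add.2 ⟨_, hw₀mem, _, coneGen_smul (Nat.cast_nonneg (α := ℝ) n) hk, rfl⟩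
      have hlt := hFlt _ (subset_closure hmem)
      have heqk : ((w₀, s₀) : WeakDual ℝ X × ℝ) + (n : ℝ) • k
          = (w₀ + (n : ℝ) • k.1, s₀ + (n : ℝ) * k.2) := by
        simp [Prod.ext_iff, smul_eq_mul]
      rw [heqk, hF, wadd, wsmul] at hlt
      have h2 := (div_lt_iff₀ hpos).1 hn
      nlinarith
    have hcpos : 0 < -(F (0, 1)) := by linarith
    have hc0 : F (0, 1) ≠ 0 := ne_of_lt hclt
    set xh := (-(F (0, 1)))⁻¹ • xb with hxhdef
    have heval : ∀ q : WeakDual ℝ X, q xh = (-(F (0, 1)))⁻¹ * q xb := by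
      intro q
      rw [hxhdef, map_smul, smul_eq_mul]
    have hxhC : xh ∈ C := by
      apply mem_of_indicatorE_le_zero (C := C)
      apply le_of_conj_bounds (indicatorE_ne_bot C) (indicatorE_ne_top hCne)
        (by rw [epiFn_indicatorE]; exact hCcl.prod isClosed_Ici)
        (by rw [epiFn_indicatorE]; exact hCcv.prod (convex_Ici 0))
      intro w' s hws
      have hkK : ((w', s) : WeakDual ℝ X × ℝ) ∈ charCone C f :=
        subset_coneGen _ (Or.inl hws)
      have h5 := hK0 _ hkK
      rw [heval]
      have h7 : w' xb ≤ s * (-(F (0, 1))) := by nlinarith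
      have h8 := mul_le_mul_of_nonneg_left h7 (inv_nonneg.2 hcpos.le)
      have h9 : (-(F (0, 1)))⁻¹ * (s * (-(F (0, 1)))) = s := by field_simp
      rw [h9] at h8
      linarith
    have hxhf : ∀ i, f i xh ≤ ((0 : ℝ) : EReal) := by
      intro i
      apply le_of_conj_bounds (hf i).1 (hf i).2.1 (isClosed_epiFn (hf i).2.2.2) (hf i).2.2.1
      intro w' s hws
      have hkK : ((w', s) : WeakDual ℝ X × ℝ) ∈ charCone C f :=
        subset_coneGen _ (Or.inr (Set.mem_iUnion.2 ⟨i, hws⟩))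
      have h5 := hK0 _ hkK
      rw [heval]
      have h7 : w' xb ≤ s * (-(F (0, 1))) := by nlinarith
      have h8 := mul_le_mul_of_nonneg_left h7 (inv_nonneg.2 hcpos.le)
      have h9 : (-(F (0, 1)))⁻¹ * (s * (-(F (0, 1)))) = s := by field_simp
      rw [h9] at h8
      linarith
    have hxhg : xh ∈ domFn g := by
      have hgle : g xh ≤ (((-(F (0, 1)))⁻¹ * u : ℝ) : EReal) := by
        apply le_of_conj_bounds hg.1 hg.2.1 (isClosed_epiFn hg.2.2.2) hg.2.2.1
        intro w' s hws
        have hlt := hFlt _ (subset_closure (Set.mem_add.2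
          ⟨(w', s), hws, 0, zero_mem_coneGen _, add_zero _⟩))
        rw [hF] at hlt
        rw [heval]
        have h7 : w' xb ≤ u + s * (-(F (0, 1))) := by nlinarith
        have h8 := mul_le_mul_of_nonneg_left h7 (inv_nonneg.2 hcpos.le)
        have h9 : (-(F (0, 1)))⁻¹ * (u + s * (-(F (0, 1))))
            = (-(F (0, 1)))⁻¹ * u + s := by field_simp <;> ring
        rw [h9] at h8
        linarith
      exact lt_of_le_of_lt hgle (EReal.coe_lt_top _)
    have hmem' : xh ∈ solSet C f ∩ domFn g :=
      ⟨⟨hxhC, fun i => by simpa using hxhf i⟩, hxhg⟩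
    rw [hA] at hmem'
    exact absurd hmem' (Set.notMem_empty xh)
  intro z hz r
  rcases le_total r z.2 with hr | hr
  · have h1 := hdown z hz (z.2 - r) (by linarith)
    have heq2 : z.2 - (z.2 - r) = r := by ring
    rw [heq2] at h1
    exact h1
  · have h1 := W_add_K (vert_mem_charCone hCne (t := r - z.2) (by linarith)) hz
    have heq : z + (((0 : WeakDual ℝ X), r - z.2) : WeakDual ℝ X × ℝ) = (z.1, r) := by
      simp [Prod.ext_iff]
    rwa [heq] at h1

lemma lift_coneGen_f {q₂ : WeakDual ℝ X}
    (h₂ : q₂ ∈ coneGen (⋃ i, domFn (conjFn (f i)))) :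
    ∃ s : ℝ, ((q₂, s) : WeakDual ℝ X × ℝ) ∈ charCone C f := by
  rcases h₂ with h0 | ⟨t, ht, z, hz, rfl⟩
  · rw [Set.mem_singleton_iff] at h0
    subst h0
    exact ⟨0, zero_mem_coneGen _⟩
  · have hsub : convexHull ℝ (⋃ i, domFn (conjFn (f i))) ⊆
        {w : WeakDual ℝ X | ∃ s : ℝ, ((w, s) : WeakDual ℝ X × ℝ) ∈
          convexHull ℝ (epiFn (conjFn (indicatorE C)) ∪ ⋃ i, epiFn (conjFn (f i)))} := by
      apply convexHull_min
      · intro w hw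
        obtain ⟨i, hwi⟩ := Set.mem_iUnion.1 hw
        obtain ⟨M, hM⟩ := exists_real_ge hwi
        exact ⟨M, subset_convexHull ℝ _ (Or.inr (Set.mem_iUnion.2 ⟨i, hM⟩))⟩
      · rintro w₁ ⟨s₁, hs₁⟩ w₂ ⟨s₂, hs₂⟩ a b ha hb hab
        refine ⟨a * s₁ + b * s₂, ?_⟩
        have hcv := (convex_convexHull ℝ
          (epiFn (conjFn (indicatorE C)) ∪ ⋃ i, epiFn (conjFn (f i)))) hs₁ hs₂ ha hb hab
        have heqp : a • ((w₁, s₁) : WeakDual ℝ X × ℝ) + b • (w₂, s₂)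
            = (a • w₁ + b • w₂, a * s₁ + b * s₂) := by
          simp [Prod.ext_iff, smul_eq_mul]
        rwa [heqp] at hcv
    obtain ⟨s, hs⟩ := hsub hz
    refine ⟨t * s, Or.inr ⟨t, ht, (z, s), hs, ?_⟩⟩
    simp [Prod.ext_iff, smul_eq_mul]

lemma notiii_to_notii (hCne : C.Nonempty) (hCcl : IsClosed C) (hCcv : Convex ℝ C)
    (hf : ∀ i, InGamma (f i)) (hg : InGamma g) (hA : solSet C f ∩ domFn g = ∅)
    {p : WeakDual ℝ X}
    (hp : p ∈ closure (domFn (conjFn g) + coneGen (⋃ i, domFn (conjFn (f i))) + barCone C)) :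
    (({p} : Set (WeakDual ℝ X)) ×ˢ (Set.univ : Set ℝ)) ⊆
      closure (epiFn (conjFn g) + charCone C f) := by
  rintro ⟨q, r⟩ ⟨hq, -⟩
  rw [Set.mem_singleton_iff] at hq
  subst hq
  have hPcl : IsClosed {q' : WeakDual ℝ X |
      ((q', r) : WeakDual ℝ X × ℝ) ∈ closure (epiFn (conjFn g) + charCone C f)} :=
    isClosed_closure.preimage (continuous_id.prodMk continuous_const)
  refine closure_minimal ?_ hPcl hp
  intro q' hq'
  obtain ⟨q12, h12, q₃, h₃, rfl⟩ := Set.mem_add.1 hq'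
  obtain ⟨q₁, h₁, q₂, h₂, rfl⟩ := Set.mem_add.1 h12
  obtain ⟨s₁, hs₁⟩ := exists_real_ge h₁
  obtain ⟨s₂, hs₂⟩ := lift_coneGen_f (C := C) h₂
  obtain ⟨s₃, hs₃⟩ := exists_real_ge h₃
  have hk₃ : ((q₃, s₃) : WeakDual ℝ X × ℝ) ∈ charCone C f :=
    subset_coneGen _ (Or.inl hs₃)
  have hmem : ((q₁ + q₂ + q₃, s₁ + (s₂ + s₃)) : WeakDual ℝ X × ℝ) ∈
      epiFn (conjFn g) + charCone C f := by
    refine Set.mem_add.2 ⟨(q₁, s₁), hs₁, (q₂, s₂) + (q₃, s₃), coneGen_add hs₂ hk₃, ?_⟩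
    simp [Prod.ext_iff, add_assoc]
  exact vertical hCne hCcl hCcv hf hg hA _ (subset_closure hmem) r

end MainLemmas


section FinalLemmas
variable {X : Type*} [AddCommGroup X] [Module ℝ X] [TopologicalSpace X]
  [IsTopologicalAddGroup X] [ContinuousSMul ℝ X] [LocallyConvexSpace ℝ X]
  {I : Type*} {C : Set X} {f : I → X → EReal} {g : X → EReal}

lemma charCone_eval_nonpos (hCne : C.Nonempty) {d : X} (hdC : d ∈ recCone C)
    (hdi : ∀ i, recFn (f i) d ≤ (0 : EReal)) {k : WeakDual ℝ X × ℝ}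
    (hk : k ∈ charCone C f) : k.1 d ≤ 0 := by
  have hhalf : (epiFn (conjFn (indicatorE C)) ∪ ⋃ i, epiFn (conjFn (f i))) ⊆
      {w : WeakDual ℝ X × ℝ | w.1 d ≤ 0} := by
    rintro w (hwC | hwf)
    · have hbar : w.1 ∈ barCone C := lt_of_le_of_lt hwC (EReal.coe_lt_top _)
      exact recCone_eval_nonpos hCne hdC hbar
    · obtain ⟨i, hwi⟩ := Set.mem_iUnion.1 hwf
      have hdom : w.1 ∈ domFn (conjFn (f i)) := lt_of_le_of_lt hwi (EReal.coe_lt_top _)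
      have hle : ((w.1 d : ℝ) : EReal) ≤ recFn (f i) d :=
        le_iSup₂ (f := fun q (_ : q ∈ domFn (conjFn (f i))) => ((q d : ℝ) : EReal)) w.1 hdom
      have h2 := le_trans hle (hdi i)
      exact_mod_cast h2
  have hcvx : Convex ℝ {w : WeakDual ℝ X × ℝ | w.1 d ≤ 0} := by
    intro w₁ h₁ w₂ h₂ a b ha hb hab
    show (a • w₁ + b • w₂).1 d ≤ 0
    have e1 : (a • w₁ + b • w₂).1 d = a * w₁.1 d + b * w₂.1 d := rfl
    rw [e1]
    nlinarith [mul_le_mul_of_nonneg_left (h₁ : w₁.1 d ≤ 0) ha,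
      mul_le_mul_of_nonneg_left (h₂ : w₂.1 d ≤ 0) hb]
  rcases hk with h0 | ⟨t, ht, z, hz, rfl⟩
  · rw [Set.mem_singleton_iff] at h0
    subst h0
    exact le_of_eq (wzero d)
  · have hz0 : z.1 d ≤ 0 := convexHull_min hhalf hcvx hz
    have e2 : (t • z).1 d = t * z.1 d := rfl
    rw [e2]
    nlinarith [mul_le_mul_of_nonneg_left hz0 ht]

lemma three_to_four (hCne : C.Nonempty) (hCcl : IsClosed C) (hCcv : Convex ℝ C)
    (hf : ∀ i, InGamma (f i)) (hg : InGamma g) {p : WeakDual ℝ X}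
    (hp : p ∉ closure (domFn (conjFn g) + coneGen (⋃ i, domFn (conjFn (f i))) + barCone C)) :
    ∃ d ∈ (⋂ i, {x : X | recFn (f i) x ≤ (0 : EReal)}) ∩ recCone C,
      recFn g d < ((p d : ℝ) : EReal) := by
  have hDcv : Convex ℝ (domFn (conjFn g) + coneGen (⋃ i, domFn (conjFn (f i))) + barCone C) :=
    ((domFn_conjFn_convex hg.1).add coneGen_convex).add barCone_convex
  obtain ⟨F, u, hlt, hgt⟩ := geometric_hahn_banach_closed_point hDcv.closure isClosed_closure hp
  obtain ⟨d, hd⟩ := weakdual_rep F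
  have hmemD : ∀ q₁ ∈ domFn (conjFn g), ∀ q₂ ∈ coneGen (⋃ i, domFn (conjFn (f i))),
      ∀ q₃ ∈ barCone C, q₁ + q₂ + q₃ ∈
        domFn (conjFn g) + coneGen (⋃ i, domFn (conjFn (f i))) + barCone C :=
    fun q₁ h₁ q₂ h₂ q₃ h₃ =>
      Set.mem_add.2 ⟨q₁ + q₂, Set.mem_add.2 ⟨q₁, h₁, q₂, h₂, rfl⟩, q₃, h₃, rfl⟩
  obtain ⟨w₀, s₀, hw₀⟩ := epi_conj_nonempty hg.1 hg.2.1 (isClosed_epiFn hg.2.2.2) hg.2.2.1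
  have hq₀ : w₀ ∈ domFn (conjFn g) := lt_of_le_of_lt hw₀ (EReal.coe_lt_top s₀)
  have hgd : ∀ q ∈ domFn (conjFn g), q d < u := by
    intro q hq
    have hm := hmemD q hq 0 (zero_mem_coneGen _) 0 zero_mem_barCone
    have hl := hlt _ (subset_closure hm)
    rw [hd] at hl
    have e : (q + 0 + 0) d = q d := by rw [wadd, wadd, wzero]; ring
    rwa [e] at hl
  have hcone : ∀ b ∈ coneGen (⋃ i, domFn (conjFn (f i))), b d ≤ 0 := by
    intro b hb
    by_contra hpos
    push_neg at hpos
    obtain ⟨n, hn⟩ := exists_nat_gt ((u - w₀ d) / b d)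
    have hm := hmemD w₀ hq₀ _ (coneGen_smul (Nat.cast_nonneg (α := ℝ) n) hb) 0 zero_mem_barCone
    have hl := hlt _ (subset_closure hm)
    rw [hd] at hl
    have e : (w₀ + (n : ℝ) • b + 0) d = w₀ d + (n : ℝ) * b d := by
      rw [wadd, wadd, wsmul, wzero]; ring
    rw [e] at hl
    have h2 := (div_lt_iff₀ hpos).1 hn
    linarith
  have hbar : ∀ q ∈ barCone C, q d ≤ 0 := by
    intro q hq
    by_contra hpos
    push_neg at hpos
    obtain ⟨n, hn⟩ := exists_nat_gt ((u - w₀ d) / q d)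
    have hm := hmemD w₀ hq₀ 0 (zero_mem_coneGen _) _
      (barCone_smul (Nat.cast_nonneg (α := ℝ) n) hq)
    have hl := hlt _ (subset_closure hm)
    rw [hd] at hl
    have e : (w₀ + 0 + (n : ℝ) • q) d = w₀ d + (n : ℝ) * q d := by
      rw [wadd, wadd, wzero, wsmul]; ring
    rw [e] at hl
    have h2 := (div_lt_iff₀ hpos).1 hn
    linarith
  refine ⟨d, ⟨Set.mem_iInter.2 fun i => ?_, mem_recCone_of_eval_nonpos hCcl hCcv hbar⟩, ?_⟩
  · show recFn (f i) d ≤ (0 : EReal)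
    apply iSup₂_le
    intro q hq
    have h1 : q d ≤ 0 := hcone _ (subset_coneGen _ (Set.mem_iUnion.2 ⟨i, hq⟩))
    exact_mod_cast h1
  · have h1 : recFn g d ≤ (u : EReal) :=
      iSup₂_le fun q hq => EReal.coe_le_coe_iff.2 (hgd q hq).le
    have h2 : (u : EReal) < ((p d : ℝ) : EReal) := by
      rw [EReal.coe_lt_coe_iff, ← hd p]
      exact hgt
    exact lt_of_le_of_lt h1 h2

lemma four_to_two (hCne : C.Nonempty) {p : WeakDual ℝ X}
    (h4 : ∃ d ∈ (⋂ i, {x : X | recFn (f i) x ≤ (0 : EReal)}) ∩ recCone C,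
      recFn g d < ((p d : ℝ) : EReal)) :
    ¬ (({p} : Set (WeakDual ℝ X)) ×ˢ (Set.univ : Set ℝ) ⊆
        closure (epiFn (conjFn g) + charCone C f)) := by
  obtain ⟨d, ⟨hdi', hdC⟩, hdg⟩ := h4
  have hdi : ∀ i, recFn (f i) d ≤ (0 : EReal) := fun i => Set.mem_iInter.1 hdi' i
  obtain ⟨β, hβ1, hβ2⟩ : ∃ β : ℝ, recFn g d ≤ (β : EReal) ∧ β < p d := by
    rcases ereal_trich (recFn g d) with h | ⟨m, h⟩ | h
    · exact ⟨p d - 1, by rw [h]; exact bot_le, by linarith⟩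
    · rw [h] at hdg
      exact ⟨m, le_of_eq h, EReal.coe_lt_coe_iff.1 hdg⟩
    · rw [h] at hdg
      exact absurd hdg (by simp)
  intro hsub
  have hcont : Continuous fun z : WeakDual ℝ X × ℝ => z.1 d :=
    (WeakBilin.eval_continuous (topDualPairing ℝ X) d).comp continuous_fst
  have hU : closure (epiFn (conjFn g) + charCone C f) ⊆
      {z : WeakDual ℝ X × ℝ | z.1 d ≤ β} := by
    apply closure_minimal ?_ (isClosed_le hcont continuous_const)
    rintro z hz
    obtain ⟨e, he, k, hk, rfl⟩ := Set.mem_add.1 hz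
    have he1 : e.1 d ≤ β := by
      have hedom : e.1 ∈ domFn (conjFn g) := lt_of_le_of_lt he (EReal.coe_lt_top e.2)
      have hle : ((e.1 d : ℝ) : EReal) ≤ recFn g d :=
        le_iSup₂ (f := fun q (_ : q ∈ domFn (conjFn g)) => ((q d : ℝ) : EReal)) e.1 hedom
      have h2 := le_trans hle hβ1
      exact_mod_cast h2
    have hk1 : k.1 d ≤ 0 := charCone_eval_nonpos hCne hdC hdi hk
    show (e + k).1 d ≤ β
    have e2 : (e + k).1 d = e.1 d + k.1 d := rfl
    rw [e2]
    linarith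
  have hm := hU (hsub (show ((p, (0 : ℝ)) : WeakDual ℝ X × ℝ) ∈
    ({p} : Set (WeakDual ℝ X)) ×ˢ (Set.univ : Set ℝ) from
    ⟨Set.mem_singleton p, Set.mem_univ _⟩))
  have hfin : p d ≤ β := hm
  linarith

end FinalLemmas

/-- Theorem 4 (On the failure of the hidden assumption), equivalences (i)–(iv). -/
theorem stmt12 [IsTopologicalAddGroup X] [ContinuousSMul ℝ X] [LocallyConvexSpace ℝ X] [T2Space X] {I : Type*} (C : Set X) (hCne : C.Nonempty) (hCcl : IsClosed C) (hCcv : Convex ℝ C)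
    (f : I → X → EReal) (hf : ∀ i, InGamma (f i))
    (g : X → EReal) (hg : InGamma g)
    (hA : solSet C f ∩ domFn g = ∅) (p : WeakDual ℝ X) :
    [ epiFn (conjFn (fun x => g x + indicatorE (solSet C f) x)) ∩
          (({p} : Set (WeakDual ℝ X)) ×ˢ (Set.univ : Set ℝ)) ≠
        closure (epiFn (conjFn g) + charCone C f) ∩
          (({p} : Set (WeakDual ℝ X)) ×ˢ (Set.univ : Set ℝ)),
      ¬ (({p} : Set (WeakDual ℝ X)) ×ˢ (Set.univ : Set ℝ) ⊆
          closure (epiFn (conjFn g) + charCone C f)),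
      p ∉ closure (domFn (conjFn g) + coneGen (⋃ i, domFn (conjFn (f i))) + barCone C),
      ∃ d ∈ (⋂ i, {x : X | recFn (f i) x ≤ (0 : EReal)}) ∩ recCone C,
        recFn g d < ((p d : ℝ) : EReal) ].TFAE := by
  have hTop : ∀ x, g x + indicatorE (solSet C f) x = ⊤ := by
    intro x
    by_cases hx : x ∈ solSet C f
    · have hgx : g x = ⊤ := by
        by_contra hgx
        have hmem : x ∈ solSet C f ∩ domFn g := ⟨hx, lt_top_iff_ne_top.2 hgx⟩
        rw [hA] at hmem
        exact absurd hmem (Set.notMem_empty x)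
      rw [show indicatorE (solSet C f) x = 0 from if_pos hx, hgx, add_zero]
    · rw [show indicatorE (solSet C f) x = ⊤ from if_neg hx]
      exact EReal.add_top_of_ne_bot (hg.1 x)
  have hconjbot : ∀ q : WeakDual ℝ X,
      conjFn (fun x => g x + indicatorE (solSet C f) x) q = ⊥ := by
    intro q
    have h1 : ∀ x : X, (q x : EReal) - (g x + indicatorE (solSet C f) x) = ⊥ := by
      intro x; rw [hTop x]; exact EReal.sub_top _
    show (⨆ x : X, ((q x : EReal) - (g x + indicatorE (solSet C f) x))) = ⊥
    simp only [h1, iSup_bot]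
  have hepiU : epiFn (conjFn (fun x => g x + indicatorE (solSet C f) x)) = Set.univ :=
    Set.eq_univ_of_forall fun z => by
      show conjFn _ z.1 ≤ (z.2 : EReal)
      rw [hconjbot]
      exact bot_le
  tfae_have 1 ↔ 2 := by
    rw [hepiU, Set.univ_inter]
    constructor
    · intro hne hsubs
      exact hne (Set.inter_eq_right.2 hsubs).symm
    · intro hns heq
      refine hns ?_
      rw [heq]
      exact Set.inter_subset_left
  tfae_have 2 → 3 := by
    intro h2 hp
    exact h2 (notiii_to_notii hCne hCcl hCcv hf hg hA hp)
  tfae_have 3 → 4 := fun h3 => three_to_four hCne hCcl hCcv hf hg h3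
  tfae_have 4 → 2 := fun h4 => four_to_two hCne h4
  tfae_finish
end
end
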